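/- arXiv:1504.05932 — 9 statements merged into one kernel-verified Lean document; each statement's English description precedes it below -/
import Mathlib

section
/- Let f be a strategy-proof and non-bossy allocation mechanism over a basic categorized domain. For any pair of profiles P and P' such that for all agents j, the set of bundles ranked strictly above f^j(P) in R_j' is a subset of the set of bundles ranked strictly above f^j(P) in R_j, we have f(P') = f(P). -/
/-- A bundle in a basic categorized domain: one item (from `Fin n`) per category (`Fin p`). -/
abbrev Bundle (n p : ℕ) := Fin p → Fin n

/-- A preference: a binary relation on bundles (`R a b` means `a` is strictly preferred to `b`). -/
abbrev Pref (n p : ℕ) := Bundle n p → Bundle n p → Prop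

/-- A profile assigns a preference to each of the `n` agents. -/
abbrev Profile (n p : ℕ) := Fin n → Pref n p

/-- An allocation mechanism: maps a profile to the bundle of each agent. -/
abbrev Mechanism (n p : ℕ) := Profile n p → Fin n → Bundle n p

/-- All preferences in the profile are strict linear orders. -/
def ValidProfile {n p : ℕ} (P : Profile n p) : Prop :=
  ∀ j, IsStrictTotalOrder (Bundle n p) (P j)

/-- A valid allocation: in every category, no item is given to two agents. -/
def ValidAlloc {n p : ℕ} (A : Fin n → Bundle n p) : Prop :=
  ∀ i : Fin p, Function.Injective fun j => A j i

/-- Strategy-proofness: no agent can get a strictly better bundle by misreporting. -/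
def StrategyProof {n p : ℕ} (f : Mechanism n p) : Prop :=
  ∀ P : Profile n p, ValidProfile P → ∀ j : Fin n, ∀ R' : Pref n p,
    IsStrictTotalOrder (Bundle n p) R' →
    f P j = f (Function.update P j R') j ∨ P j (f P j) (f (Function.update P j R') j)

/-- Non-bossiness: an agent cannot change others' bundles without changing her own. -/
def NonBossy {n p : ℕ} (f : Mechanism n p) : Prop :=
  ∀ P : Profile n p, ValidProfile P → ∀ j : Fin n, ∀ R' : Pref n p,
    IsStrictTotalOrder (Bundle n p) R' →
    f P j = f (Function.update P j R') j → f P = f (Function.update P j R')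

/-- Relabel a bundle by permuting the items of category `i` by `M`. -/
def relabel {n p : ℕ} (i : Fin p) (M : Fin n ≃ Fin n) (d : Bundle n p) : Bundle n p :=
  Function.update d i (M (d i))

/-- The preference induced on relabeled bundles. -/
def permPref {n p : ℕ} (i : Fin p) (M : Fin n ≃ Fin n) (R : Pref n p) : Pref n p :=
  fun a b => R (relabel i M.symm a) (relabel i M.symm b)

/-- Category-wise neutrality: permuting the items of one category permutes the allocation. -/
def CatNeutral {n p : ℕ} (f : Mechanism n p) : Prop :=
  ∀ P : Profile n p, ValidProfile P → ∀ (i : Fin p) (M : Fin n ≃ Fin n) (j : Fin n),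
    f (fun j' => permPref i M (P j')) j = relabel i M (f P j)

/-- Pareto optimality of a mechanism. -/
def ParetoOptimal {n p : ℕ} (f : Mechanism n p) : Prop :=
  ∀ P : Profile n p, ValidProfile P →
    ¬ ∃ A : Fin n → Bundle n p, ValidAlloc A ∧
      (∀ j, A j = f P j ∨ P j (A j) (f P j)) ∧ (∃ j, P j (A j) (f P j))

/-- `R'` is a pushup of `d` from `R`: relative order of other bundles unchanged,
and the set of bundles above `d` only shrinks. -/
def Pushup {n p : ℕ} (d : Bundle n p) (R R' : Pref n p) : Prop :=
  (∀ a b, a ≠ d → b ≠ d → (R' a b ↔ R a b)) ∧ (∀ a, R' a d → R a d)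

/-- `A` is the serial-dictatorship allocation for profile `P` and agent order `K`
(`K t` is the agent acting at step `t`): each dictator's bundle avoids earlier dictators'
items and is preferred to every other bundle avoiding earlier dictators' items. -/
def IsSDAlloc {n p : ℕ} (P : Profile n p) (K : Fin n ≃ Fin n) (A : Fin n → Bundle n p) : Prop :=
  ∀ t : Fin n,
    (∀ s : Fin n, s < t → ∀ i, A (K s) i ≠ A (K t) i) ∧
    (∀ b : Bundle n p, (∀ s : Fin n, s < t → ∀ i, A (K s) i ≠ b i) →
      b ≠ A (K t) → P (K t) (A (K t)) b)

/-- `f` is a serial dictatorship. -/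
def SerialDict {n p : ℕ} (f : Mechanism n p) : Prop :=
  ∃ K : Fin n ≃ Fin n, ∀ P : Profile n p, ValidProfile P → IsSDAlloc P K (f P)

lemma one_step {n p : ℕ} (f : Mechanism n p) (hSP : StrategyProof f) (hNB : NonBossy f)
    (Q : Profile n p) (hQ : ValidProfile Q) (j : Fin n) (R' : Pref n p)
    (hR' : IsStrictTotalOrder (Bundle n p) R')
    (hup : ∀ c, R' c (f Q j) → Q j c (f Q j)) :
    f (Function.update Q j R') = f Q := by
  have hQ'valid : ValidProfile (Function.update Q j R') := by
    intro j'
    rcases eq_or_ne j' j with rfl | hne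
    · rw [Function.update_self]; exact hR'
    · rw [Function.update_of_ne hne]; exact hQ j'
  have hback : Function.update (Function.update Q j R') j (Q j) = Q := by
    rw [Function.update_idem, Function.update_eq_self]
  have heq : f Q j = f (Function.update Q j R') j := by
    by_contra hne
    have h1 := hSP Q hQ j R' hR'
    have h2 := hSP (Function.update Q j R') hQ'valid j (Q j) (hQ j)
    rw [hback] at h2
    rcases h1 with h1 | h1
    · exact hne h1
    rcases h2 with h2 | h2
    · exact hne h2.symm
    rw [Function.update_self] at h2
    have h3 := hup _ h2
    haveI := hQ j
    exact irrefl_of (Q j) (f Q j) (trans_of (Q j) h1 h3)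
  exact (hNB Q hQ j R' hR' heq).symm

theorem statement1 (n p : ℕ) (f : Mechanism n p)
    (hSP : StrategyProof f) (hNB : NonBossy f)
    (P P' : Profile n p) (hP : ValidProfile P) (hP' : ValidProfile P')
    (h : ∀ j : Fin n, ∀ c : Bundle n p, P' j c (f P j) → P j c (f P j)) :
    f P' = f P := by
  classical
  set Q : ℕ → Profile n p := fun k j => if (j : ℕ) < k then P' j else P j with hQdef
  have hQvalid : ∀ k, ValidProfile (Q k) := by
    intro k j
    simp only [hQdef]
    split
    · exact hP' j
    · exact hP j
  have key : ∀ k, f (Q k) = f P := by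
    intro k
    induction k with
    | zero =>
      have h0 : Q 0 = P := funext fun j => by simp [hQdef]
      rw [h0]
    | succ k ih =>
      by_cases hk : k < n
      · have hQj : Q k ⟨k, hk⟩ = P ⟨k, hk⟩ := by simp [hQdef]
        have hstep : Q (k + 1) = Function.update (Q k) ⟨k, hk⟩ (P' ⟨k, hk⟩) := by
          funext j'
          rcases eq_or_ne j' ⟨k, hk⟩ with rfl | hne
          · simp [hQdef]
          · rw [Function.update_of_ne hne]
            have hne' : (j' : ℕ) ≠ k := fun hc => hne (Fin.ext hc)
            have hif : ((j' : ℕ) < k + 1) = ((j' : ℕ) < k) := by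
              simp only [eq_iff_iff]; omega
            simp only [hQdef, hif]
        have hup : ∀ c, P' ⟨k, hk⟩ c (f (Q k) ⟨k, hk⟩) →
            Q k ⟨k, hk⟩ c (f (Q k) ⟨k, hk⟩) := by
          rw [ih, hQj]
          exact h ⟨k, hk⟩
        rw [hstep, one_step f hSP hNB (Q k) (hQvalid k) ⟨k, hk⟩ (P' ⟨k, hk⟩) (hP' _) hup, ih]
      · have hsame : Q (k + 1) = Q k := by
          funext j'
          have := j'.isLt
          simp only [hQdef]
          rw [if_pos (by omega), if_pos (by omega)]
        rw [hsame]; exact ih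
  have hQn : Q n = P' := funext fun j => by simp [hQdef, j.isLt]
  rw [← hQn]
  exact key n
end

section
/- Let f be a strategy-proof and non-bossy allocation mechanism over a basic categorized domain. For any profile P, any agent j, any bundle d, and any linear order R_j' that is a pushup of d from R_j, either f(R_j', R_{-j}) = f(P) or f^j(R_j', R_{-j}) = d. -/
theorem statement2 (n p : ℕ) (f : Mechanism n p)
    (hSP : StrategyProof f) (hNB : NonBossy f)
    (P : Profile n p) (hP : ValidProfile P) (j : Fin n) (d : Bundle n p)
    (R' : Pref n p) (hR' : IsStrictTotalOrder (Bundle n p) R')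
    (hpush : Pushup d (P j) R') :
    f (Function.update P j R') = f P ∨ f (Function.update P j R') j = d := by

  set P' := Function.update P j R' with hP'def
  have hVP' : ValidProfile P' := by
    intro j'
    by_cases h : j' = j
    · subst h; simpa [P', Function.update_self] using hR'
    · simpa [P', Function.update_of_ne h] using hP j'
  have hupd : Function.update P' j (P j) = P := by
    funext j'
    by_cases h : j' = j
    · subst h; simp [P']
    · simp [P', Function.update_of_ne h]
  have hasymm : ∀ a b, P j a b → P j b a → False := by
    intro a b hab hba
    have := hP j
    exact this.irrefl a (this.trans _ _ _ hab hba)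
  by_cases hsame : f P j = f P' j
  · left
    exact (hNB P hP j R' hR' hsame).symm
  · have h1 := hSP P hP j R' hR'
    have h1' : P j (f P j) (f P' j) := h1.resolve_left hsame
    have h2 := hSP P' hVP' j (P j) (hP j)
    rw [hupd] at h2
    have h2' : R' (f P' j) (f P j) := by
      simpa [P'] using h2.resolve_left (fun h => hsame h.symm)
    right
    by_cases hd : f P' j = d
    · exact hd
    · exfalso
      by_cases hd2 : f P j = d
      · rw [hd2] at h2' h1'
        exact hasymm _ _ (hpush.2 _ h2') h1'
      · exact hasymm _ _ ((hpush.1 _ _ hd hd2).mp h2') h1'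
end

section
/- Any strategy-proof, non-bossy, and category-wise neutral allocation mechanism over a basic categorized domain with p ≥ 2 categories is Pareto optimal: for every profile P there is no allocation A such that every agent weakly prefers A(j) to f^j(P) and some agent strictly prefers A(j) to f^j(P). -/
section Aux

variable {n p : ℕ}

lemma sto_irrefl {R : Pref n p} (h : IsStrictTotalOrder (Bundle n p) R) (a : Bundle n p) :
    ¬ R a a := h.toIsStrictOrder.toIrrefl.irrefl a

lemma sto_trans {R : Pref n p} (h : IsStrictTotalOrder (Bundle n p) R) {a b c : Bundle n p}
    (h1 : R a b) (h2 : R b c) : R a c := h.toIsStrictOrder.toIsTrans.trans a b c h1 h2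

lemma sto_asymm {R : Pref n p} (h : IsStrictTotalOrder (Bundle n p) R) {a b : Bundle n p}
    (h1 : R a b) (h2 : R b a) : False := sto_irrefl h a (sto_trans h h1 h2)

/-- Transport of a strict total order along an injective map. -/
lemma sto_comap {R : Pref n p} (h : IsStrictTotalOrder (Bundle n p) R)
    {g : Bundle n p → Bundle n p} (hg : Function.Injective g) :
    IsStrictTotalOrder (Bundle n p) (fun a b => R (g a) (g b)) := by
  refine { trichotomous := ?_, irrefl := ?_, trans := ?_ }
  · intro a b
    intro h1 h2
    exact hg (h.toTrichotomous.trichotomous (g a) (g b) h1 h2)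
  · intro a; exact sto_irrefl h (g a)
  · intro a b c; exact fun h1 h2 => sto_trans h h1 h2

/-- Single-agent monotonic-transformation invariance from SP + NB. -/
lemma MM1 (f : Mechanism n p) (hSP : StrategyProof f) (hNB : NonBossy f)
    (P : Profile n p) (hP : ValidProfile P) (j : Fin n) (R' : Pref n p)
    (hR' : IsStrictTotalOrder (Bundle n p) R')
    (hmon : ∀ b, P j (f P j) b → R' (f P j) b) :
    f (Function.update P j R') = f P := by
  have hVP' : ValidProfile (Function.update P j R') := by
    intro j'; by_cases hj : j' = j
    · subst hj; simpa using hR'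
    · simpa [Function.update_of_ne hj] using hP j'
  rcases hSP P hP j R' hR' with heq | hlt
  · exact (hNB P hP j R' hR' heq).symm
  · have hback : Function.update (Function.update P j R') j (P j) = P := by
      rw [Function.update_idem, Function.update_eq_self]
    rcases hSP (Function.update P j R') hVP' j (P j) (hP j) with heq2 | hlt2
    · rw [hback] at heq2
      exact (hNB P hP j R' hR' heq2.symm).symm
    · rw [hback] at hlt2
      have h2 : R' (f (Function.update P j R') j) (f P j) := by
        simpa using hlt2
      exact absurd (hmon _ hlt) (fun h1 => sto_asymm hR' h1 h2)

/-- Chain version: replace all agents' preferences by monotonic transforms at their bundles. -/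
lemma MMchain (f : Mechanism n p) (hSP : StrategyProof f) (hNB : NonBossy f)
    (P R : Profile n p) (hP : ValidProfile P) (hR : ValidProfile R)
    (hmon : ∀ j b, P j (f P j) b → R j (f P j) b) : f R = f P := by
  have key : ∀ k : ℕ, k ≤ n → f (fun j => if j.val < k then R j else P j) = f P := by
    intro k
    induction k with
    | zero =>
      intro _
      have : (fun j : Fin n => if j.val < 0 then R j else P j) = P := by
        funext j; simp
      rw [this]
    | succ k ih =>
      intro hk
      have hkn : k < n := Nat.lt_of_succ_le hk
      have hSk := ih (Nat.le_of_lt hkn)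
      have hVS : ValidProfile (fun j : Fin n => if j.val < k then R j else P j) := by
        intro j; by_cases h : j.val < k
        · simpa [h] using hR j
        · simpa [h] using hP j
      have hupd : Function.update (fun j : Fin n => if j.val < k then R j else P j)
          ⟨k, hkn⟩ (R ⟨k, hkn⟩) = fun j : Fin n => if j.val < k + 1 then R j else P j := by
        funext j
        by_cases hj : j = ⟨k, hkn⟩
        · subst hj; simp
        · have hv : j.val ≠ k := fun h => hj (Fin.ext h)
          rw [Function.update_of_ne hj]
          by_cases h2 : j.val < k
          · simp [h2, Nat.lt_succ_of_lt h2]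
          · have : ¬ j.val < k + 1 := by omega
            simp [h2, this]
      rw [← hupd]
      rw [MM1 f hSP hNB _ hVS ⟨k, hkn⟩ (R ⟨k, hkn⟩) (hR ⟨k, hkn⟩) ?_]
      · exact hSk
      · intro b hb
        rw [hSk] at hb
        have hb' : P ⟨k, hkn⟩ (f P ⟨k, hkn⟩) b := by simpa using hb
        rw [hSk]
        exact hmon _ b hb'
  have h := key n le_rfl
  have : (fun j : Fin n => if j.val < n then R j else P j) = R := by
    funext j; simp [j.isLt]
  rwa [this] at h

/-- Iterating category-wise neutrality over all categories below `k`. -/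
lemma CNchain (f : Mechanism n p) (hCN : CatNeutral f)
    (P : Profile n p) (hP : ValidProfile P) (M : Fin p → (Fin n ≃ Fin n)) :
    ∀ k : ℕ, k ≤ p → ∀ j,
      f (fun j' a b => P j' (fun i => if i.val < k then (M i).symm (a i) else a i)
          (fun i => if i.val < k then (M i).symm (b i) else b i)) j
        = fun i => if i.val < k then M i (f P j i) else f P j i := by
  intro k
  induction k with
  | zero =>
    intro _ j
    have h1 : (fun (j' : Fin n) (a b : Bundle n p) =>
        P j' (fun i => if i.val < 0 then (M i).symm (a i) else a i)
          (fun i => if i.val < 0 then (M i).symm (b i) else b i)) = P := by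
      funext j' a b; simp
    rw [h1]
    funext i; simp
  | succ k ih =>
    intro hk j
    have hkp : k < p := Nat.lt_of_succ_le hk
    have hQV : ValidProfile (fun j' a b =>
        P j' (fun i => if i.val < k then (M i).symm (a i) else a i)
          (fun i => if i.val < k then (M i).symm (b i) else b i)) := by
      intro j'
      apply sto_comap (hP j')
      intro a b h
      funext i
      have h2 := congrFun h i
      by_cases h3 : i.val < k
      · simp only [h3, if_pos] at h2
        exact (M i).symm.injective h2
      · simpa [h3] using h2
    have hbundle : ∀ a : Bundle n p,
        (fun i => if i.val < k then (M i).symm ((relabel ⟨k, hkp⟩ (M ⟨k, hkp⟩).symm a) i)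
            else (relabel ⟨k, hkp⟩ (M ⟨k, hkp⟩).symm a) i)
          = fun i => if i.val < k + 1 then (M i).symm (a i) else a i := by
      intro a; funext i
      by_cases h1 : i = ⟨k, hkp⟩
      · subst h1
        simp [relabel]
      · have hv : i.val ≠ k := fun h => h1 (Fin.ext h)
        rw [show (relabel ⟨k, hkp⟩ (M ⟨k, hkp⟩).symm a) i = a i from
          Function.update_of_ne h1 _ _]
        by_cases h2 : i.val < k
        · simp [h2, Nat.lt_succ_of_lt h2]
        · have : ¬ i.val < k + 1 := by omega
          simp [h2, this]
    have hprof : (fun j' => permPref ⟨k, hkp⟩ (M ⟨k, hkp⟩)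
        ((fun j'' a b => P j'' (fun i => if i.val < k then (M i).symm (a i) else a i)
          (fun i => if i.val < k then (M i).symm (b i) else b i)) j'))
        = fun j' a b => P j' (fun i => if i.val < k + 1 then (M i).symm (a i) else a i)
          (fun i => if i.val < k + 1 then (M i).symm (b i) else b i) := by
      funext j' a b
      show P j' _ _ = P j' _ _
      rw [hbundle a, hbundle b]
    have hstep := hCN _ hQV ⟨k, hkp⟩ (M ⟨k, hkp⟩) j
    rw [hprof] at hstep
    rw [hstep, ih (Nat.le_of_lt hkp) j]
    funext i
    by_cases h1 : i = ⟨k, hkp⟩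
    · subst h1
      simp [relabel]
    · have hv : i.val ≠ k := fun h => h1 (Fin.ext h)
      rw [show (relabel ⟨k, hkp⟩ (M ⟨k, hkp⟩)
          (fun i => if i.val < k then M i (f P j i) else f P j i)) i
          = (if i.val < k then M i (f P j i) else f P j i) from Function.update_of_ne h1 _ _]
      by_cases h2 : i.val < k
      · simp [h2, Nat.lt_succ_of_lt h2]
      · have : ¬ i.val < k + 1 := by omega
        simp [h2, this]

end Aux

theorem statement3 (n p : ℕ) (hp : 2 ≤ p) (f : Mechanism n p)
    (hfA : ∀ P : Profile n p, ValidProfile P → ValidAlloc (f P))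
    (hSP : StrategyProof f) (hNB : NonBossy f) (hCN : CatNeutral f) :
    ParetoOptimal f := by
  classical
  intro P hP
  rintro ⟨A, hAvalid, hdom, j0, hj0⟩
  have hfP := hfA P hP
  let eF : (i : Fin p) → Fin n ≃ Fin n := fun i =>
    Equiv.ofBijective (fun j => f P j i) ((Finite.injective_iff_bijective).mp (hfP i))
  let eA : (i : Fin p) → Fin n ≃ Fin n := fun i =>
    Equiv.ofBijective (fun j => A j i) ((Finite.injective_iff_bijective).mp (hAvalid i))
  let M : Fin p → Fin n ≃ Fin n := fun i => (eF i).symm.trans (eA i)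
  have hM : ∀ i j, M i (f P j i) = A j i := by
    intro i j
    calc M i (f P j i) = eA i ((eF i).symm ((eF i) j)) := rfl
      _ = eA i j := by rw [Equiv.symm_apply_apply]
      _ = A j i := rfl
  -- the relabeled profile Q with f Q = A
  set Q : Profile n p := fun j' a b =>
    P j' (fun i => (M i).symm (a i)) (fun i => (M i).symm (b i)) with hQdefn
  have hQV : ValidProfile Q := by
    intro j'
    apply sto_comap (hP j')
    intro a b h
    funext i
    exact (M i).symm.injective (congrFun h i)
  have hfQ : ∀ j, f Q j = A j := by
    intro j
    have h := CNchain f hCN P hP M p le_rfl j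
    have hprof : (fun (j' : Fin n) (a b : Bundle n p) =>
        P j' (fun i => if i.val < p then (M i).symm (a i) else a i)
          (fun i => if i.val < p then (M i).symm (b i) else b i)) = Q := by
      funext j' a b
      show P j' _ _ = P j' _ _
      have h1 : (fun i : Fin p => if i.val < p then (M i).symm (a i) else a i)
          = fun i => (M i).symm (a i) := by funext i; simp [i.isLt]
      have h2 : (fun i : Fin p => if i.val < p then (M i).symm (b i) else b i)
          = fun i => (M i).symm (b i) := by funext i; simp [i.isLt]
      rw [h1, h2]
    rw [hprof] at h
    rw [h]
    funext i
    simp [i.isLt, hM]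
  -- the target profile R with A j on top and f P j second
  let e : Bundle n p → ℕ := fun b => ((Fintype.equivFin (Bundle n p)) b : ℕ)
  have he : Function.Injective e := fun a b h =>
    (Fintype.equivFin (Bundle n p)).injective (Fin.val_injective h)
  let key : Fin n → Bundle n p → ℕ := fun j b =>
    if b = A j then 0 else if b = f P j then 1 else e b + 2
  have hk0 : ∀ j b, b = A j → key j b = 0 := by
    intro j b hb; simp only [key]; rw [if_pos hb]
  have hk1 : ∀ j b, b ≠ A j → b = f P j → key j b = 1 := by
    intro j b hb hb2; simp only [key]; rw [if_neg hb, if_pos hb2]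
  have hk2 : ∀ j b, b ≠ A j → b ≠ f P j → key j b = e b + 2 := by
    intro j b hb hb2; simp only [key]; rw [if_neg hb, if_neg hb2]
  have hkeyinj : ∀ j, Function.Injective (key j) := by
    intro j a b h
    by_cases ha : a = A j <;> by_cases hb : b = A j <;>
      by_cases ha2 : a = f P j <;> by_cases hb2 : b = f P j
    all_goals (try (rw [ha, hb]; done)) <;> (try (rw [ha2, hb2]; done))
    all_goals first
      | (rw [hk0 j a ha] at h;
         first | rw [hk1 j b hb hb2] at h | rw [hk2 j b hb hb2] at h
         omega)
      | (rw [hk0 j b hb] at h;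
         first | rw [hk1 j a ha ha2] at h | rw [hk2 j a ha ha2] at h
         omega)
      | (rw [hk1 j a ha ha2, hk2 j b hb hb2] at h; omega)
      | (rw [hk2 j a ha ha2, hk1 j b hb hb2] at h; omega)
      | (rw [hk2 j a ha ha2, hk2 j b hb hb2] at h;
         exact he (by omega))
  let Rpr : Profile n p := fun j a b => key j a < key j b
  have hRV : ValidProfile Rpr := by
    intro j
    refine { trichotomous := ?_, irrefl := ?_, trans := ?_ }
    · intro a b
      intro h1 h2
      exact hkeyinj j (le_antisymm (not_lt.mp h2) (not_lt.mp h1))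
    · intro a; exact lt_irrefl _
    · intro a b c; exact lt_trans
  have hkeyA : ∀ j, key j (A j) = 0 := by intro j; simp [key]
  have hkeypos : ∀ j b, b ≠ A j → 0 < key j b := by
    intro j b hb
    simp only [key, hb, if_neg, if_false]
    split_ifs <;> omega
  -- chain from Q
  have h1 : f Rpr = f Q := by
    apply MMchain f hSP hNB Q Rpr hQV hRV
    intro j b hb
    have hbne : b ≠ f Q j := fun h => sto_irrefl (hQV j) _ (h ▸ hb)
    show key j (f Q j) < key j b
    rw [hfQ j] at hbne ⊢
    rw [hkeyA]
    exact hkeypos j b hbne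
  -- chain from P
  have h2 : f Rpr = f P := by
    apply MMchain f hSP hNB P Rpr hP hRV
    intro j b hb
    show key j (f P j) < key j b
    have hbne : b ≠ f P j := fun h => sto_irrefl (hP j) _ (h ▸ hb)
    have hbneA : b ≠ A j := by
      intro h
      subst h
      rcases hdom j with h | h
      · exact hbne h
      · exact sto_asymm (hP j) hb h
    by_cases hAf : A j = f P j
    · rw [← hAf, hkeyA]
      exact hkeypos j b hbneA
    · have hk1 : key j (f P j) = 1 := by
        simp only [key, if_pos]
        rw [if_neg (fun h => hAf h.symm)]
      rw [hk1]
      simp only [key, hbneA, hbne, if_neg, if_false]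
      omega
  have hAeq : ∀ j, A j = f P j := fun j =>
    (hfQ j).symm.trans ((congrFun h1 j).symm.trans (congrFun h2 j))
  rw [hAeq j0] at hj0
  exact sto_irrefl (hP j0) _ hj0
end

section
/- Let f be a strategy-proof and non-bossy allocation mechanism over a basic categorized domain with p ≥ 2 and assume f is Pareto optimal. For any profile P and distinct agents j1, j2, letting a = f^{j1}(P) and b = f^{j2}(P), there does not exist a bundle c with c_i ∈ {a_i, b_i} for every category i such that c is strictly preferred to a under R_{j1} and c is strictly preferred to b under R_{j2}. -/
section Aux

variable {α : Type*} [Fintype α] [DecidableEq α]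

/-- Rank function putting `c0, c1, c2` first, second, third, everything else after. -/
noncomputable def g3 (c0 c1 c2 : α) (d : α) : ℕ :=
  if d = c0 then 0 else if d = c1 then 1 else if d = c2 then 2
  else ((Fintype.equivFin α) d : ℕ) + 3

/-- The strict total order induced by `g3`. -/
noncomputable def R3 (c0 c1 c2 : α) : α → α → Prop :=
  fun x y => g3 c0 c1 c2 x < g3 c0 c1 c2 y

variable {c0 c1 c2 : α}

lemma g3_c0 : g3 c0 c1 c2 c0 = 0 := by unfold g3; rw [if_pos rfl]

lemma g3_c1 (h10 : c1 ≠ c0) : g3 c0 c1 c2 c1 = 1 := by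
  unfold g3; rw [if_neg h10, if_pos rfl]

lemma g3_c2 (h20 : c2 ≠ c0) (h21 : c2 ≠ c1) : g3 c0 c1 c2 c2 = 2 := by
  unfold g3; rw [if_neg h20, if_neg h21, if_pos rfl]

lemma g3_eq_zero {d : α} (h : g3 c0 c1 c2 d = 0) : d = c0 := by
  unfold g3 at h
  split_ifs at h with e0 e1 e2 <;>
    first
      | exact e0
      | exact e1
      | exact e2
      | exact absurd h (by omega)

lemma g3_eq_one {d : α} (h : g3 c0 c1 c2 d = 1) : d = c1 := by
  unfold g3 at h
  split_ifs at h with e0 e1 e2 <;>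
    first
      | exact e0
      | exact e1
      | exact e2
      | exact absurd h (by omega)

lemma g3_eq_two {d : α} (h : g3 c0 c1 c2 d = 2) : d = c2 := by
  unfold g3 at h
  split_ifs at h with e0 e1 e2 <;>
    first
      | exact e0
      | exact e1
      | exact e2
      | exact absurd h (by omega)

lemma g3_big {d : α} (h : 3 ≤ g3 c0 c1 c2 d) :
    g3 c0 c1 c2 d = ((Fintype.equivFin α) d : ℕ) + 3 := by
  by_cases e0 : d = c0
  · rw [e0, g3_c0] at h; omega
  by_cases e1 : d = c1
  · unfold g3 at h; rw [if_neg e0, if_pos e1] at h; omega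
  by_cases e2 : d = c2
  · unfold g3 at h; rw [if_neg e0, if_neg e1, if_pos e2] at h; omega
  · unfold g3; rw [if_neg e0, if_neg e1, if_neg e2]

lemma g3_inj (h10 : c1 ≠ c0) (h20 : c2 ≠ c0) (h21 : c2 ≠ c1) :
    Function.Injective (g3 c0 c1 c2) := by
  intro x y h
  rcases lt_or_ge (g3 c0 c1 c2 x) 3 with hx | hx
  · have hx' : g3 c0 c1 c2 x = 0 ∨ g3 c0 c1 c2 x = 1 ∨ g3 c0 c1 c2 x = 2 := by omega
    rcases hx' with h0 | h1 | h2
    · rw [g3_eq_zero h0, g3_eq_zero (show g3 c0 c1 c2 y = 0 by omega)]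
    · rw [g3_eq_one h1, g3_eq_one (show g3 c0 c1 c2 y = 1 by omega)]
    · rw [g3_eq_two h2, g3_eq_two (show g3 c0 c1 c2 y = 2 by omega)]
  · have hy : 3 ≤ g3 c0 c1 c2 y := h ▸ hx
    rw [g3_big hx, g3_big hy] at h
    exact (Fintype.equivFin α).injective (Fin.val_injective (by omega))

lemma g3_pair (h21 : c2 ≠ c1) (d : α) :
    (d = c0 ∧ g3 c0 c1 c2 d = 0 ∧ g3 c0 c2 c1 d = 0) ∨
    (d = c1 ∧ g3 c0 c1 c2 d = 1 ∧ g3 c0 c2 c1 d = 2) ∨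
    (d = c2 ∧ g3 c0 c1 c2 d = 2 ∧ g3 c0 c2 c1 d = 1) ∨
    (g3 c0 c1 c2 d = g3 c0 c2 c1 d ∧ 3 ≤ g3 c0 c1 c2 d) := by
  by_cases e0 : d = c0
  · refine Or.inl ⟨e0, ?_, ?_⟩ <;> (unfold g3; rw [if_pos e0])
  by_cases e1 : d = c1
  · have e2 : d ≠ c2 := fun hh => h21 (hh ▸ e1)
    refine Or.inr (Or.inl ⟨e1, ?_, ?_⟩)
    · unfold g3; rw [if_neg e0, if_pos e1]
    · unfold g3; rw [if_neg e0, if_neg e2, if_pos e1]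
  by_cases e2 : d = c2
  · refine Or.inr (Or.inr (Or.inl ⟨e2, ?_, ?_⟩))
    · unfold g3; rw [if_neg e0, if_neg e1, if_pos e2]
    · unfold g3; rw [if_neg e0, if_pos e2]
  · refine Or.inr (Or.inr (Or.inr ⟨?_, ?_⟩))
    · unfold g3; rw [if_neg e0, if_neg e1, if_neg e2, if_neg e0, if_neg e2, if_neg e1]
    · unfold g3; rw [if_neg e0, if_neg e1, if_neg e2]; omega

lemma R3_cross (h21 : c2 ≠ c1) {x y : α}
    (h : R3 c0 c1 c2 x y) (h' : R3 c0 c2 c1 y x) : x = c1 ∧ y = c2 := by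
  have px := g3_pair (c0 := c0) h21 x
  have py := g3_pair (c0 := c0) h21 y
  unfold R3 at h h'
  rcases px with ⟨ex, hx1, hx2⟩ | ⟨ex, hx1, hx2⟩ | ⟨ex, hx1, hx2⟩ | ⟨hx1, hx2⟩ <;>
    rcases py with ⟨ey, hy1, hy2⟩ | ⟨ey, hy1, hy2⟩ | ⟨ey, hy1, hy2⟩ | ⟨hy1, hy2⟩ <;>
      first
        | exact ⟨ex, ey⟩
        | (exfalso; omega)

lemma R3_sto (h10 : c1 ≠ c0) (h20 : c2 ≠ c0) (h21 : c2 ≠ c1) :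
    IsStrictTotalOrder α (R3 c0 c1 c2) :=
  { trichotomous := fun x y hxy hyx => by
      rcases lt_trichotomy (g3 c0 c1 c2 x) (g3 c0 c1 c2 y) with hlt | heq | hgt
      · exact absurd hlt hxy
      · exact g3_inj h10 h20 h21 heq
      · exact absurd hgt hyx
    irrefl := fun x => lt_irrefl _
    trans := fun _ _ _ hxy hyz => lt_trans hxy hyz }

lemma R3_01 (h10 : c1 ≠ c0) : R3 c0 c1 c2 c0 c1 := by
  unfold R3; rw [g3_c0, g3_c1 h10]; omega

lemma R3_12 (h10 : c1 ≠ c0) (h20 : c2 ≠ c0) (h21 : c2 ≠ c1) : R3 c0 c1 c2 c1 c2 := by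
  unfold R3; rw [g3_c1 h10, g3_c2 h20 h21]; omega

lemma R3_not_c0 (x : α) : ¬ R3 c0 c1 c2 x c0 := by
  unfold R3; rw [g3_c0]; omega

lemma R3_lt_c1 (h10 : c1 ≠ c0) {x : α} (h : R3 c0 c1 c2 x c1) : x = c0 := by
  unfold R3 at h; rw [g3_c1 h10] at h
  exact g3_eq_zero (c1 := c1) (c2 := c2) (by omega)

lemma R3_lt_c2 (h20 : c2 ≠ c0) (h21 : c2 ≠ c1) {x : α} (h : R3 c0 c1 c2 x c2) :
    x = c0 ∨ x = c1 := by
  unfold R3 at h; rw [g3_c2 h20 h21] at h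
  have h' : g3 c0 c1 c2 x = 0 ∨ g3 c0 c1 c2 x = 1 := by omega
  rcases h' with h0 | h1
  · exact Or.inl (g3_eq_zero h0)
  · exact Or.inr (g3_eq_one h1)

end Aux

lemma validProfile_update {n p : ℕ} {P : Profile n p} (hP : ValidProfile P)
    {j : Fin n} {R : Pref n p} (hR : IsStrictTotalOrder (Bundle n p) R) :
    ValidProfile (Function.update P j R) := by
  intro j'
  by_cases h : j' = j
  · subst h; rw [Function.update_self]; exact hR
  · rw [Function.update_of_ne h]; exact hP j'

theorem statement4 (n p : ℕ) (hp : 2 ≤ p) (f : Mechanism n p)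
    (hfA : ∀ P : Profile n p, ValidProfile P → ValidAlloc (f P))
    (hSP : StrategyProof f) (hNB : NonBossy f) (hPO : ParetoOptimal f)
    (P : Profile n p) (hP : ValidProfile P) (j1 j2 : Fin n) (hne : j1 ≠ j2) :
    ¬ ∃ c : Bundle n p,
      (∀ i : Fin p, c i = f P j1 i ∨ c i = f P j2 i) ∧
      P j1 c (f P j1) ∧ P j2 c (f P j2) := by
  rintro ⟨c, hc, h1, h2⟩
  haveI inst1 := hP j1
  haveI inst2 := hP j2
  set a := f P j1 with ha
  set b := f P j2 with hb
  have hval : ValidAlloc (f P) := hfA P hP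
  have hab : ∀ i, a i ≠ b i := fun i h => hne (hval i h)
  have hca : c ≠ a := by
    intro h; rw [h] at h1; exact absurd h1 (Std.Irrefl.irrefl a)
  have hcb : c ≠ b := by
    intro h; rw [h] at h2; exact absurd h2 (Std.Irrefl.irrefl b)
  set c' : Bundle n p := fun i => if c i = a i then b i else a i with hc'def
  have hpair : ∀ i, (c i = a i ∧ c' i = b i) ∨ (c i = b i ∧ c' i = a i) := by
    intro i
    by_cases h : c i = a i
    · exact Or.inl ⟨h, by simp only [hc'def]; rw [if_pos h]⟩
    · exact Or.inr ⟨(hc i).resolve_left h, by simp only [hc'def]; rw [if_neg h]⟩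
  have hpairswap : ∀ i, (c' i = a i ∧ c i = b i) ∨ (c' i = b i ∧ c i = a i) := by
    intro i
    rcases hpair i with ⟨u, v⟩ | ⟨u, v⟩
    · exact Or.inr ⟨v, u⟩
    · exact Or.inl ⟨v, u⟩
  obtain ⟨i1, hi1⟩ : ∃ i, c' i = b i := by
    obtain ⟨i, hi⟩ := Function.ne_iff.mp hcb
    exact ⟨i, ((hpair i).resolve_right (fun h => hi h.1)).2⟩
  obtain ⟨i2, hi2⟩ : ∃ i, c' i = a i := by
    obtain ⟨i, hi⟩ := Function.ne_iff.mp hca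
    exact ⟨i, ((hpair i).resolve_left (fun h => hi h.1)).2⟩
  have hc'a : c' ≠ a := fun h => hab i1 ((congrFun h i1).symm.trans hi1)
  have hc'b : c' ≠ b := fun h => hab i2 (hi2.symm.trans (congrFun h i2))
  have hcc' : ∀ i, c i ≠ c' i := by
    intro i
    rcases hpair i with ⟨u, v⟩ | ⟨u, v⟩
    · rw [u, v]; exact hab i
    · rw [u, v]; exact fun h => hab i h.symm
  have hc'c : c' ≠ c := fun h => hcc' ⟨0, by omega⟩ (congrFun h ⟨0, by omega⟩).symm
  -- the four preference orders used in the proof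
  have sto1m : IsStrictTotalOrder (Bundle n p) (R3 c a c') :=
    R3_sto hca.symm hc'c hc'a
  have sto1b : IsStrictTotalOrder (Bundle n p) (R3 c c' a) :=
    R3_sto hc'c hca.symm hc'a.symm
  have sto2m : IsStrictTotalOrder (Bundle n p) (R3 c b c') :=
    R3_sto hcb.symm hc'c hc'b
  have sto2b : IsStrictTotalOrder (Bundle n p) (R3 c c' b) :=
    R3_sto hc'c hcb.symm hc'b.symm
  -- two-sided strategy-proofness
  have sp2 : ∀ Q : Profile n p, ValidProfile Q → ∀ (j : Fin n) (R' : Pref n p),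
      IsStrictTotalOrder (Bundle n p) R' →
      f (Function.update Q j R') j = f Q j ∨
        R' (f (Function.update Q j R') j) (f Q j) := by
    intro Q hQ j R' hR'
    have h := hSP (Function.update Q j R') (validProfile_update hQ hR') j (Q j) (hQ j)
    rw [Function.update_idem, Function.update_eq_self, Function.update_self] at h
    exact h
  -- validity of pairwise trades
  have mkValid : ∀ d1 d2 : Bundle n p,
      (∀ i, (d1 i = a i ∧ d2 i = b i) ∨ (d1 i = b i ∧ d2 i = a i)) →
      ValidAlloc (Function.update (Function.update (f P) j1 d1) j2 d2) := by
    intro d1 d2 hd i x y hxy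
    replace hxy : Function.update (Function.update (f P) j1 d1) j2 d2 x i
        = Function.update (Function.update (f P) j1 d1) j2 d2 y i := hxy
    by_cases hx2 : x = j2
    · rw [hx2, Function.update_self] at hxy
      by_cases hy2 : y = j2
      · exact hx2.trans hy2.symm
      rw [Function.update_of_ne hy2] at hxy
      by_cases hy1 : y = j1
      · rw [hy1, Function.update_self] at hxy
        rcases hd i with ⟨u, v⟩ | ⟨u, v⟩
        · rw [u, v] at hxy; exact absurd hxy.symm (hab i)
        · rw [u, v] at hxy; exact absurd hxy (hab i)
      · rw [Function.update_of_ne hy1] at hxy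
        rcases hd i with ⟨u, v⟩ | ⟨u, v⟩
        · rw [v] at hxy
          exact absurd (hval i (show f P y i = f P j2 i from hxy.symm.trans (congrFun hb i))) hy2
        · rw [v] at hxy
          exact absurd (hval i (show f P y i = f P j1 i from hxy.symm.trans (congrFun ha i))) hy1
    rw [Function.update_of_ne hx2] at hxy
    by_cases hx1 : x = j1
    · rw [hx1, Function.update_self] at hxy
      by_cases hy2 : y = j2
      · rw [hy2, Function.update_self] at hxy
        rcases hd i with ⟨u, v⟩ | ⟨u, v⟩
        · rw [u, v] at hxy; exact absurd hxy (hab i)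
        · rw [u, v] at hxy; exact absurd hxy.symm (hab i)
      rw [Function.update_of_ne hy2] at hxy
      by_cases hy1 : y = j1
      · exact hx1.trans hy1.symm
      · rw [Function.update_of_ne hy1] at hxy
        rcases hd i with ⟨u, v⟩ | ⟨u, v⟩
        · rw [u] at hxy
          exact absurd (hval i (show f P y i = f P j1 i from hxy.symm.trans (congrFun ha i))) hy1
        · rw [u] at hxy
          exact absurd (hval i (show f P y i = f P j2 i from hxy.symm.trans (congrFun hb i))) hy2
    · rw [Function.update_of_ne hx1] at hxy
      by_cases hy2 : y = j2
      · rw [hy2, Function.update_self] at hxy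
        rcases hd i with ⟨u, v⟩ | ⟨u, v⟩
        · rw [v] at hxy
          exact absurd (hval i (show f P x i = f P j2 i from hxy.trans (congrFun hb i))) hx2
        · rw [v] at hxy
          exact absurd (hval i (show f P x i = f P j1 i from hxy.trans (congrFun ha i))) hx1
      rw [Function.update_of_ne hy2] at hxy
      by_cases hy1 : y = j1
      · rw [hy1, Function.update_self] at hxy
        rcases hd i with ⟨u, v⟩ | ⟨u, v⟩
        · rw [u] at hxy
          exact absurd (hval i (show f P x i = f P j1 i from hxy.trans (congrFun ha i))) hx1
        · rw [u] at hxy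
          exact absurd (hval i (show f P x i = f P j2 i from hxy.trans (congrFun hb i))) hx2
      · rw [Function.update_of_ne hy1] at hxy
        exact hval i hxy
  -- killing profiles where the allocation equals f P but a pairwise trade improves
  have POkill : ∀ Q : Profile n p, ValidProfile Q → f Q = f P →
      ∀ d1 d2 : Bundle n p,
      (∀ i, (d1 i = a i ∧ d2 i = b i) ∨ (d1 i = b i ∧ d2 i = a i)) →
      (d1 = a ∨ Q j1 d1 a) → (d2 = b ∨ Q j2 d2 b) →
      (Q j1 d1 a ∨ Q j2 d2 b) → False := by
    intro Q hQ hfQ d1 d2 hd w1 w2 st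
    apply hPO Q hQ
    have hAj1 : Function.update (Function.update (f P) j1 d1) j2 d2 j1 = d1 := by
      rw [Function.update_of_ne hne, Function.update_self]
    have hAj2 : Function.update (Function.update (f P) j1 d1) j2 d2 j2 = d2 :=
      Function.update_self _ _ _
    refine ⟨Function.update (Function.update (f P) j1 d1) j2 d2,
      mkValid d1 d2 hd, ?_, ?_⟩
    · intro j
      by_cases hj2 : j = j2
      · subst hj2
        rw [hAj2, hfQ]
        rcases w2 with h | h
        · exact Or.inl (h.trans hb)
        · exact Or.inr (by rw [← hb]; exact h)
      rw [Function.update_of_ne hj2]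
      by_cases hj1 : j = j1
      · subst hj1
        rw [Function.update_self, hfQ]
        rcases w1 with h | h
        · exact Or.inl (h.trans ha)
        · exact Or.inr (by rw [← ha]; exact h)
      · rw [Function.update_of_ne hj1, hfQ]
        exact Or.inl rfl
    · rcases st with h | h
      · exact ⟨j1, by rw [hAj1, hfQ, ← ha]; exact h⟩
      · exact ⟨j2, by rw [hAj2, hfQ, ← hb]; exact h⟩
  -- trichotomy case analysis
  rcases trichotomous (r := P j2) c' b with hx | hx | hx
  · exact POkill P hP rfl c c' hpair (Or.inr h1) (Or.inr hx) (Or.inl h1)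
  · exact POkill P hP rfl c c' hpair (Or.inr h1) (Or.inl hx) (Or.inl h1)
  rcases trichotomous (r := P j1) c' a with hy | hy | hy
  · exact POkill P hP rfl c' c hpairswap (Or.inr hy) (Or.inr h2) (Or.inr h2)
  · exact POkill P hP rfl c' c hpairswap (Or.inl hy) (Or.inr h2) (Or.inr h2)
  -- main case: hx : P j2 b c', hy : P j1 a c'
  -- Step 1: j1 reports [c, a, c', ...]
  set P1 : Profile n p := Function.update P j1 (R3 c a c') with hP1d
  have hvp1 : ValidProfile P1 := validProfile_update hP sto1m
  have hz1 : f P1 j1 = a := by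
    have s : f P1 j1 = f P j1 ∨ R3 c a c' (f P1 j1) (f P j1) :=
      sp2 P hP j1 (R3 c a c') sto1m
    rcases s with h | h
    · exact h.trans ha.symm
    · rw [← ha] at h
      have hc1 : f P1 j1 = c := R3_lt_c1 hca.symm h
      have s' : f P j1 = f P1 j1 ∨ P j1 (f P j1) (f P1 j1) :=
        hSP P hP j1 (R3 c a c') sto1m
      rcases s' with h' | h'
      · exact h'.symm.trans ha.symm
      · rw [hc1, ← ha] at h'
        exact absurd (IsTrans.trans _ _ _ h1 h') (Std.Irrefl.irrefl c)
  have nb1 : f P = f P1 :=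
    hNB P hP j1 (R3 c a c') sto1m (show f P j1 = f P1 j1 by rw [hz1, ← ha])
  -- Step 2: j2 reports [c, b, c', ...]
  set P00 : Profile n p := Function.update P1 j2 (R3 c b c') with hP00d
  have hvp00 : ValidProfile P00 := validProfile_update hvp1 sto2m
  have eP1j2 : P1 j2 = P j2 := by
    rw [hP1d]; exact Function.update_of_ne (Ne.symm hne) _ _
  have hb1 : f P1 j2 = b := by rw [← nb1, ← hb]
  have hz2 : f P00 j2 = b := by
    have s : f P00 j2 = f P1 j2 ∨ R3 c b c' (f P00 j2) (f P1 j2) :=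
      sp2 P1 hvp1 j2 (R3 c b c') sto2m
    rcases s with h | h
    · exact h.trans hb1
    · rw [hb1] at h
      have hc2 : f P00 j2 = c := R3_lt_c1 hcb.symm h
      have s' : f P1 j2 = f P00 j2 ∨ P1 j2 (f P1 j2) (f P00 j2) :=
        hSP P1 hvp1 j2 (R3 c b c') sto2m
      rcases s' with h' | h'
      · exact h'.symm.trans hb1
      · rw [hb1, hc2, eP1j2] at h'
        exact absurd (IsTrans.trans _ _ _ h2 h') (Std.Irrefl.irrefl c)
  have nb2 : f P1 = f P00 :=
    hNB P1 hvp1 j2 (R3 c b c') sto2m (show f P1 j2 = f P00 j2 by rw [hz2, hb1])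
  have hf00 : f P00 = f P := by rw [← nb2, ← nb1]
  have h00j1 : f P00 j1 = a := by rw [hf00, ← ha]
  have eP00j1 : P00 j1 = R3 c a c' := by
    rw [hP00d, Function.update_of_ne hne, hP1d, Function.update_self]
  have eP00j2 : P00 j2 = R3 c b c' := by rw [hP00d, Function.update_self]
  -- Step 3: j1 swaps to [c, c', a, ...]
  set P10 : Profile n p := Function.update P00 j1 (R3 c c' a) with hP10d
  have hvp10 : ValidProfile P10 := validProfile_update hvp00 sto1b
  have eP10j1 : P10 j1 = R3 c c' a := by rw [hP10d, Function.update_self]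
  have eP10j2 : P10 j2 = R3 c b c' := by
    rw [hP10d, Function.update_of_ne (Ne.symm hne)]; exact eP00j2
  have s3 : f P10 j1 = a ∨ R3 c c' a (f P10 j1) a := by
    have s : f P10 j1 = f P00 j1 ∨ R3 c c' a (f P10 j1) (f P00 j1) :=
      sp2 P00 hvp00 j1 (R3 c c' a) sto1b
    rwa [h00j1] at s
  have s3' : a = f P10 j1 ∨ R3 c a c' a (f P10 j1) := by
    have s : f P00 j1 = f P10 j1 ∨ P00 j1 (f P00 j1) (f P10 j1) :=
      hSP P00 hvp00 j1 (R3 c c' a) sto1b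
    rwa [h00j1, eP00j1] at s
  by_cases hw : f P10 j1 = a
  · have e : f P00 = f P10 :=
      hNB P00 hvp00 j1 (R3 c c' a) sto1b (show f P00 j1 = f P10 j1 by rw [hw, h00j1])
    have hf10 : f P10 = f P := by rw [← e]; exact hf00
    exact POkill P10 hvp10 hf10 c' c hpairswap
      (Or.inr (by rw [eP10j1]; exact R3_12 hc'c hca.symm hc'a.symm))
      (Or.inr (by rw [eP10j2]; exact R3_01 hcb.symm))
      (Or.inl (by rw [eP10j1]; exact R3_12 hc'c hca.symm hc'a.symm))
  have hw' : f P10 j1 = c' := by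
    rcases s3 with h | h
    · exact absurd h hw
    rcases R3_lt_c2 hca.symm hc'a.symm h with h' | h'
    · rcases s3' with h'' | h''
      · exact absurd h''.symm hw
      · rw [h'] at h''
        exact absurd h'' (R3_not_c0 a)
    · exact h'
  -- Step 4: j2 swaps to [c, c', b, ...]
  set P01 : Profile n p := Function.update P00 j2 (R3 c c' b) with hP01d
  have hvp01 : ValidProfile P01 := validProfile_update hvp00 sto2b
  have eP01j1 : P01 j1 = R3 c a c' := by
    rw [hP01d, Function.update_of_ne hne]; exact eP00j1
  have eP01j2 : P01 j2 = R3 c c' b := by rw [hP01d, Function.update_self]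
  have s4 : f P01 j2 = b ∨ R3 c c' b (f P01 j2) b := by
    have s : f P01 j2 = f P00 j2 ∨ R3 c c' b (f P01 j2) (f P00 j2) :=
      sp2 P00 hvp00 j2 (R3 c c' b) sto2b
    rwa [hz2] at s
  have s4' : b = f P01 j2 ∨ R3 c b c' b (f P01 j2) := by
    have s : f P00 j2 = f P01 j2 ∨ P00 j2 (f P00 j2) (f P01 j2) :=
      hSP P00 hvp00 j2 (R3 c c' b) sto2b
    rwa [hz2, eP00j2] at s
  by_cases hv : f P01 j2 = b
  · have e : f P00 = f P01 :=
      hNB P00 hvp00 j2 (R3 c c' b) sto2b (show f P00 j2 = f P01 j2 by rw [hv, hz2])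
    have hf01 : f P01 = f P := by rw [← e]; exact hf00
    exact POkill P01 hvp01 hf01 c c' hpair
      (Or.inr (by rw [eP01j1]; exact R3_01 hca.symm))
      (Or.inr (by rw [eP01j2]; exact R3_12 hc'c hcb.symm hc'b.symm))
      (Or.inl (by rw [eP01j1]; exact R3_01 hca.symm))
  have hv' : f P01 j2 = c' := by
    rcases s4 with h | h
    · exact absurd h hv
    rcases R3_lt_c2 hcb.symm hc'b.symm h with h' | h'
    · rcases s4' with h'' | h''
      · exact absurd h''.symm hv
      · rw [h'] at h''
        exact absurd h'' (R3_not_c0 b)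
    · exact h'
  -- Step 5: from P10, j2 swaps to [c, c', b, ...]
  set P11 : Profile n p := Function.update P10 j2 (R3 c c' b) with hP11d
  have hvp11 : ValidProfile P11 := validProfile_update hvp10 sto2b
  have hr : f P10 j2 ≠ b := by
    intro h
    apply hne
    apply hfA P10 hvp10 i1
    show f P10 j1 i1 = f P10 j2 i1
    rw [hw', h]
    exact hi1
  have s5 : f P10 j2 = f P11 j2 ∨ R3 c b c' (f P10 j2) (f P11 j2) := by
    have s : f P10 j2 = f P11 j2 ∨ P10 j2 (f P10 j2) (f P11 j2) :=
      hSP P10 hvp10 j2 (R3 c c' b) sto2b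
    rwa [eP10j2] at s
  have s5' : f P11 j2 = f P10 j2 ∨ R3 c c' b (f P11 j2) (f P10 j2) :=
    sp2 P10 hvp10 j2 (R3 c c' b) sto2b
  have hyr : f P11 j2 = f P10 j2 := by
    rcases s5' with h | h
    · exact h
    rcases s5 with h' | h'
    · exact h'.symm
    exact absurd (R3_cross hc'b h' h).1 hr
  have nb5 : f P10 = f P11 :=
    hNB P10 hvp10 j2 (R3 c c' b) sto2b (show f P10 j2 = f P11 j2 from hyr.symm)
  have h11j1 : f P11 j1 = c' := by rw [← nb5]; exact hw'
  -- Step 6: P11 is also reachable from P01 by j1's swap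
  have eP11 : P11 = Function.update P01 j1 (R3 c c' a) := by
    rw [hP11d, hP10d, hP01d]
    exact Function.update_comm hne _ _ _
  have hs : f P01 j1 ≠ a := by
    intro h
    apply hne
    apply hfA P01 hvp01 i2
    show f P01 j1 i2 = f P01 j2 i2
    rw [h, hv']
    exact hi2.symm
  have s6 : f P01 j1 = f P11 j1 ∨ R3 c a c' (f P01 j1) (f P11 j1) := by
    have s := hSP P01 hvp01 j1 (R3 c c' a) sto1b
    rwa [← eP11, eP01j1] at s
  have s6' : f P11 j1 = f P01 j1 ∨ R3 c c' a (f P11 j1) (f P01 j1) := by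
    have s := sp2 P01 hvp01 j1 (R3 c c' a) sto1b
    rwa [← eP11] at s
  have hxs : f P11 j1 = f P01 j1 := by
    rcases s6' with h | h
    · exact h
    rcases s6 with h' | h'
    · exact h'.symm
    exact absurd (R3_cross hc'a h' h).1 hs
  have nb6 : f P01 = f P11 := by
    have e := hNB P01 hvp01 j1 (R3 c c' a) sto1b (by rw [← eP11]; exact hxs.symm)
    rwa [← eP11] at e
  have h11j2 : f P11 j2 = c' := by rw [← nb6]; exact hv'
  -- Step 7: contradiction with validity of the allocation at P11
  apply hne
  apply hfA P11 hvp11 ⟨0, by omega⟩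
  show f P11 j1 ⟨0, by omega⟩ = f P11 j2 ⟨0, by omega⟩
  rw [h11j1, h11j2]
end

section
/- The serial dictatorship allocation mechanism with respect to any fixed order over the agents, on a basic categorized domain, is strategy-proof, non-bossy, and category-wise neutral. -/
section SDAux

variable {n p : ℕ}

lemma relabel_relabel_symm (i : Fin p) (M : Fin n ≃ Fin n) (d : Bundle n p) :
    relabel i M (relabel i M.symm d) = d := by
  simp [relabel, Function.update_idem]

lemma relabel_symm_relabel (i : Fin p) (M : Fin n ≃ Fin n) (d : Bundle n p) :
    relabel i M.symm (relabel i M d) = d := by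
  simp [relabel, Function.update_idem]

lemma relabel_injective (i : Fin p) (M : Fin n ≃ Fin n) :
    Function.Injective (relabel (n := n) i M) :=
  Function.LeftInverse.injective (relabel_symm_relabel i M)

lemma relabel_symm_injective (i : Fin p) (M : Fin n ≃ Fin n) :
    Function.Injective (relabel (n := n) i M.symm) :=
  Function.LeftInverse.injective (relabel_relabel_symm i M)

lemma sd_step (K : Fin n ≃ Fin n) {P P' : Profile n p} {A A' : Fin n → Bundle n p}
    (hA : IsSDAlloc P K A) (hA' : IsSDAlloc P' K A') (s : Fin n)
    (hsto : IsStrictTotalOrder (Bundle n p) (P (K s)))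
    (hprev : ∀ u : Fin n, u < s → A (K u) = A' (K u))
    (hps : P (K s) = P' (K s)) : A (K s) = A' (K s) := by
  by_contra hne
  have h1 : P (K s) (A (K s)) (A' (K s)) :=
    (hA s).2 _ (fun u hu i => by rw [hprev u hu]; exact (hA' s).1 u hu i) (Ne.symm hne)
  have h2 : P' (K s) (A' (K s)) (A (K s)) :=
    (hA' s).2 _ (fun u hu i => by rw [← hprev u hu]; exact (hA s).1 u hu i) hne
  rw [← hps] at h2
  exact sto_asymm hsto h1 h2

lemma sd_eq_upto (K : Fin n ≃ Fin n) {P P' : Profile n p} {A A' : Fin n → Bundle n p}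
    (hP : ValidProfile P) (hA : IsSDAlloc P K A) (hA' : IsSDAlloc P' K A') :
    ∀ s : Fin n, (∀ u : Fin n, u ≤ s → (P (K u) = P' (K u) ∨ A (K u) = A' (K u))) →
      A (K s) = A' (K s) := by
  intro s
  induction s using WellFoundedLT.induction with
  | _ s ih =>
    intro h
    have hprev : ∀ u : Fin n, u < s → A (K u) = A' (K u) := fun u hu =>
      ih u hu (fun v hv => h v (hv.trans hu.le))
    rcases h s le_rfl with hp | he
    · exact sd_step K hA hA' s (hP (K s)) hprev hp
    · exact he

end SDAux

theorem statement6 (n p : ℕ) (f : Mechanism n p) (K : Fin n ≃ Fin n)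
    (hfA : ∀ P : Profile n p, ValidProfile P → ValidAlloc (f P))
    (hSD : ∀ P : Profile n p, ValidProfile P → IsSDAlloc P K (f P)) :
    StrategyProof f ∧ NonBossy f ∧ CatNeutral f := by
  have main : ∀ (P : Profile n p), ValidProfile P → ∀ (j : Fin n) (R' : Pref n p),
      IsStrictTotalOrder (Bundle n p) R' →
      (∀ u : Fin n, u < K.symm j → f P (K u) = f (Function.update P j R') (K u)) ∧
      ValidProfile (Function.update P j R') := by
    intro P hP j R' hR'
    have hP' : ValidProfile (Function.update P j R') := by
      intro j'
      by_cases h : j' = j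
      · subst h; simpa using hR'
      · rw [Function.update_of_ne h]; exact hP j'
    refine ⟨?_, hP'⟩
    intro u hu
    refine sd_eq_upto K hP (hSD P hP) (hSD _ hP') u (fun v hv => Or.inl ?_)
    have hv' : v < K.symm j := lt_of_le_of_lt hv hu
    have hne : K v ≠ j := by
      intro h
      have : v = K.symm j := by rw [← h, Equiv.symm_apply_apply]
      exact absurd this (ne_of_lt hv')
    exact (Function.update_of_ne hne R' P).symm
  have hSP : StrategyProof f := by
    intro P hP j R' hR'
    obtain ⟨hprev, hP'⟩ := main P hP j R' hR'
    have hA := hSD P hP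
    have hA' := hSD _ hP'
    set t := K.symm j with ht
    have hKt : K t = j := K.apply_symm_apply j
    rcases eq_or_ne (f P (K t)) (f (Function.update P j R') (K t)) with he | hne
    · left; rw [hKt] at he; exact he
    · right
      have h := (hA t).2 (f (Function.update P j R') (K t))
        (fun u hu i => by rw [hprev u hu]; exact (hA' t).1 u hu i) (Ne.symm hne)
      rw [hKt] at h
      exact h
  have hNB : NonBossy f := by
    intro P hP j R' hR' heq
    obtain ⟨-, hP'⟩ := main P hP j R' hR'
    have hall : ∀ s : Fin n, f P (K s) = f (Function.update P j R') (K s) := by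
      intro s
      refine sd_eq_upto K hP (hSD P hP) (hSD _ hP') s (fun u _ => ?_)
      by_cases h : K u = j
      · exact Or.inr (by rw [h]; exact heq)
      · exact Or.inl (Function.update_of_ne h R' P).symm
    funext j'
    have := hall (K.symm j')
    rwa [K.apply_symm_apply] at this
  refine ⟨hSP, hNB, ?_⟩
  intro P hP i M j
  set Q : Profile n p := fun j' => permPref i M (P j') with hQdef
  have hQv : ValidProfile Q := by
    intro j'
    haveI := hP j'
    refine { trichotomous := ?_, irrefl := ?_, trans := ?_ }
    · intro a b hab hba
      rcases trichotomous_of (P j') (relabel i M.symm a) (relabel i M.symm b) with h | h | h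
      · exact absurd h hab
      · exact relabel_symm_injective i M h
      · exact absurd h hba
    · intro a
      exact irrefl_of (P j') _
    · intro a b c hab hbc
      exact trans_of (P j') hab hbc
  have hA'SD : IsSDAlloc Q K (fun j' => relabel i M (f P j')) := by
    intro t
    obtain ⟨h1, h2⟩ := hSD P hP t
    constructor
    · intro s hs i'
      by_cases hi : i' = i
      · show relabel i M (f P (K s)) i' ≠ relabel i M (f P (K t)) i'
        rw [hi]
        simp only [relabel, Function.update_self]
        exact fun h => (h1 s hs i) (M.injective h)
      · show relabel i M (f P (K s)) i' ≠ relabel i M (f P (K t)) i'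
        simp only [relabel, Function.update_of_ne hi]
        exact h1 s hs i'
    · intro b hb hbne
      have hb' : ∀ s : Fin n, s < t → ∀ i', f P (K s) i' ≠ relabel i M.symm b i' := by
        intro s hs i'
        by_cases hi : i' = i
        · rw [hi]
          simp only [relabel, Function.update_self]
          intro h
          apply hb s hs i
          show relabel i M (f P (K s)) i = b i
          simp only [relabel, Function.update_self, h, Equiv.apply_symm_apply]
        · have := hb s hs i'
          simp only [relabel, Function.update_of_ne hi] at this ⊢
          exact this
      have hne2 : relabel i M.symm b ≠ f P (K t) := by
        intro h
        have h2' := congrArg (relabel i M) h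
        rw [relabel_relabel_symm] at h2'
        exact hbne h2'
      have hfin := h2 (relabel i M.symm b) hb' hne2
      show P (K t) (relabel i M.symm (relabel i M (f P (K t)))) (relabel i M.symm b)
      rwa [relabel_symm_relabel]
  have hall : ∀ s : Fin n, f Q (K s) = relabel i M (f P (K s)) := by
    intro s
    exact sd_eq_upto K hQv (hSD Q hQv) hA'SD s (fun u _ => Or.inl rfl)
  have := hall (K.symm j)
  rwa [K.apply_symm_apply] at this
end

section
/- In a categorial sequential allocation mechanism (CSAM) defined by an order O over agent–category pairs, if agent j is optimistic then for every profile the rank (in her own preference order, with rank 1 best and rank n^p worst) of the bundle she receives is at most n^p + 1 − ∏_{l=K_j}^{p} k_{j, O_j(l)}. -/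
open scoped Classical

/-- A categorial sequential allocation mechanism: a linear order over agent–category
pairs, i.e. a bijection from rounds `Fin (n*p)` to pairs. -/
abbrev Csam (n p : ℕ) := Fin (n * p) ≃ Fin n × Fin p

/-- The rank of bundle `b` in preference `R` (1 = best, `n^p` = worst). -/
noncomputable def rank {n p : ℕ} (R : Pref n p) (b : Bundle n p) : ℕ :=
  1 + (Finset.univ.filter fun c => R c b).card

/-- `kval O j i`: the number of category-`i` items still available when agent `j`
picks from category `i` (depends only on `O`). -/
def kval {n p : ℕ} (O : Csam n p) (j : Fin n) (i : Fin p) : ℕ :=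
  1 + (Finset.univ.filter fun j' : Fin n => O.symm (j, i) < O.symm (j', i)).card

/-- `Oj O j l`: the `l`-th category (0-based) that agent `j` visits in `O`. -/
noncomputable def Oj {n p : ℕ} (O : Csam n p) (j : Fin n) (l : Fin p) : Fin p :=
  (O ((Finset.univ.image fun i : Fin p => O.symm (j, i)).orderIsoOfFin
      (by
        rw [Finset.card_image_of_injective _
          (fun a b h => congrArg Prod.snd (O.symm.injective h))]
        simp) l).1).2

/-- `NoInterruptF O j K`: for every later position `l > K` of agent `j`, no other agent
picks from category `Oj O j l` between agent `j`'s pick in category `Oj O j K`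
and her pick in category `Oj O j l`. -/
def NoInterruptF {n p : ℕ} (O : Csam n p) (j : Fin n) (K : ℕ) : Prop :=
  ∀ lK : Fin p, (lK : ℕ) = K → ∀ l : Fin p, lK < l → ∀ j' : Fin n, j' ≠ j →
    ¬ (O.symm (j, Oj O j lK) < O.symm (j', Oj O j l) ∧
       O.symm (j', Oj O j l) < O.symm (j, Oj O j l))

/-- `Kval O j`: the smallest (0-based) index `K` such that agent `j` is not interrupted
from position `K` onwards. -/
noncomputable def Kval {n p : ℕ} (O : Csam n p) (j : Fin n) : ℕ :=
  sInf {K : ℕ | K < p ∧ NoInterruptF O j K}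

/-- Item `d` of category `i` is still available at round `t` under final allocation `A`. -/
def availAt {n p : ℕ} (O : Csam n p) (A : Fin n → Bundle n p) (t : Fin (n * p))
    (i : Fin p) (d : Fin n) : Prop :=
  ∀ j' : Fin n, O.symm (j', i) < t → A j' i ≠ d

/-- Bundle `b` is still achievable by agent `j` at round `t`: it agrees with her previous
choices and all remaining components are still available. -/
def achievable {n p : ℕ} (O : Csam n p) (A : Fin n → Bundle n p) (j : Fin n)
    (t : Fin (n * p)) (b : Bundle n p) : Prop :=
  (∀ c : Fin p, O.symm (j, c) < t → b c = A j c) ∧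
  (∀ c : Fin p, ¬ O.symm (j, c) < t → availAt O A t c (b c))

/-- Agent `j` plays optimistically in the run producing allocation `A`: at each of her
rounds she picks the item of her top-ranked still-achievable bundle. -/
def OptPlays {n p : ℕ} (O : Csam n p) (P : Profile n p) (A : Fin n → Bundle n p)
    (j : Fin n) : Prop :=
  ∀ i : Fin p, ∃ b : Bundle n p, achievable O A j (O.symm (j, i)) b ∧
    (∀ b' : Bundle n p, achievable O A j (O.symm (j, i)) b' → b' ≠ b → P j b b') ∧
    A j i = b i

/-- Agent `j` plays pessimistically in the run producing `A`: at each of her rounds, for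
every available alternative item `d'`, some achievable bundle with component `d'` is worse
than every achievable bundle with the component she actually chose. -/
def PesPlays {n p : ℕ} (O : Csam n p) (P : Profile n p) (A : Fin n → Bundle n p)
    (j : Fin n) : Prop :=
  ∀ i : Fin p, ∀ d' : Fin n, availAt O A (O.symm (j, i)) i d' → d' ≠ A j i →
    ∃ w' : Bundle n p, achievable O A j (O.symm (j, i)) w' ∧ w' i = d' ∧
      ∀ w : Bundle n p, achievable O A j (O.symm (j, i)) w → w i = A j i → P j w w'

/-- `∏_{l = K_j}^{p} k_{j, O_j(l)}`. -/
noncomputable def optProd {n p : ℕ} (O : Csam n p) (j : Fin n) : ℕ :=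
  ∏ l ∈ Finset.univ.filter (fun l : Fin p => Kval O j ≤ (l : ℕ)), kval O j (Oj O j l)

/-- `∑_{l = 1}^{p} (k_{j, O_j(l)} - 1)`. -/
noncomputable def pesSum {n p : ℕ} (O : Csam n p) (j : Fin n) : ℕ :=
  ∑ l : Fin p, (kval O j (Oj O j l) - 1)


-- Auxiliary lemmas ------------------------------------------------------

lemma image_card {n p : ℕ} (O : Csam n p) (j : Fin n) :
    (Finset.univ.image fun i : Fin p => O.symm (j, i)).card = p := by
  rw [Finset.card_image_of_injective _
    (fun a b h => congrArg Prod.snd (O.symm.injective h))]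
  simp

noncomputable def tau {n p : ℕ} (O : Csam n p) (j : Fin n) (l : Fin p) : Fin (n * p) :=
  ((Finset.univ.image fun i : Fin p => O.symm (j, i)).orderIsoOfFin (image_card O j) l).1

lemma tau_strictMono {n p : ℕ} (O : Csam n p) (j : Fin n) : StrictMono (tau O j) :=
  fun _ _ h => Subtype.coe_lt_coe.mpr
    (((Finset.univ.image fun i : Fin p => O.symm (j, i)).orderIsoOfFin (image_card O j)).strictMono h)

lemma symm_Oj {n p : ℕ} (O : Csam n p) (j : Fin n) (l : Fin p) :
    O.symm (j, Oj O j l) = tau O j l := by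
  obtain ⟨i, -, hi⟩ := Finset.mem_image.mp
    (((Finset.univ.image fun i : Fin p => O.symm (j, i)).orderIsoOfFin (image_card O j) l).2)
  have h1 : O (tau O j l) = (j, i) := by
    rw [show tau O j l = O.symm (j, i) from hi.symm]; simp
  have h2 : Oj O j l = i := by
    show (O (tau O j l)).2 = i
    rw [h1]
  rw [h2, ← h1]; simp

lemma exists_Oj {n p : ℕ} (O : Csam n p) (j : Fin n) (c : Fin p) :
    ∃ l, Oj O j l = c := by
  have hmem : O.symm (j, c) ∈ (Finset.univ.image fun i : Fin p => O.symm (j, i)) :=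
    Finset.mem_image_of_mem _ (Finset.mem_univ c)
  obtain ⟨l, hl⟩ := ((Finset.univ.image fun i : Fin p => O.symm (j, i)).orderIsoOfFin
    (image_card O j)).surjective ⟨_, hmem⟩
  refine ⟨l, ?_⟩
  have ht : tau O j l = O.symm (j, c) := congrArg Subtype.val hl
  exact congrArg Prod.snd (O.symm.injective ((symm_Oj O j l).trans ht))

lemma Oj_injective {n p : ℕ} (O : Csam n p) (j : Fin n) : Function.Injective (Oj O j) := by
  intro a b h
  exact (tau_strictMono O j).injective (by rw [← symm_Oj, ← symm_Oj, h])

theorem statement7 (n p : ℕ) (hn : 0 < n) (hp : 0 < p) (O : Csam n p)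
    (P : Profile n p) (hP : ValidProfile P)
    (A : Fin n → Bundle n p) (hA : ValidAlloc A)
    (isOpt : Fin n → Bool)
    (hplay : ∀ j : Fin n, (isOpt j = true → OptPlays O P A j) ∧
      (isOpt j = false → PesPlays O P A j))
    (j : Fin n) (hj : isOpt j = true) :
    rank (P j) (A j) ≤ n ^ p + 1 - optProd O j := by
  classical
  have hopt : OptPlays O P A j := (hplay j).1 hj
  haveI := hP j
  have hasymm : ∀ a b : Bundle n p, P j a b → ¬ P j b a := fun a b h1 h2 =>
    irrefl_of (P j) a (trans_of (P j) h1 h2)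
  -- Kval facts
  have hKmem : Kval O j ∈ {K : ℕ | K < p ∧ NoInterruptF O j K} := by
    apply Nat.sInf_mem
    refine ⟨p - 1, ⟨by omega, ?_⟩⟩
    intro lK hlK l hl j' hj' h
    have h1 : (lK : ℕ) < (l : ℕ) := hl
    have h2 : (l : ℕ) < p := l.isLt
    omega
  obtain ⟨hKp, hNI⟩ := hKmem
  set lK : Fin p := ⟨Kval O j, hKp⟩ with hlKdef
  have hlKval : (lK : ℕ) = Kval O j := rfl
  set i0 : Fin p := Oj O j lK with hi0def
  set t0 : Fin (n * p) := O.symm (j, i0) with ht0def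
  have ht0 : t0 = tau O j lK := symm_Oj O j lK
  -- achievability is antitone in time
  have ach_mono : ∀ (t t' : Fin (n * p)) (x : Bundle n p), t ≤ t' →
      achievable O A j t' x → achievable O A j t x := by
    intro t t' x htt hx
    obtain ⟨h1, h2⟩ := hx
    constructor
    · intro c hc; exact h1 c (lt_of_lt_of_le hc htt)
    · intro c hc
      by_cases hc' : O.symm (j, c) < t'
      · rw [h1 c hc']
        intro j' hj' heq
        have hjj : j' = j := hA c heq
        rw [hjj] at hj'
        exact hc hj' 
      · intro j' hj'
        exact h2 c hc' j' (lt_of_lt_of_le hj' htt)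
  -- the top achievable bundle at time t0
  obtain ⟨b, hbach, hbtop, hbA⟩ := hopt i0
  rw [← ht0def] at hbach hbtop
  -- step lemma
  have step : ∀ l : Fin p, lK ≤ l → achievable O A j (tau O j l) b →
      A j (Oj O j l) = b (Oj O j l) := by
    intro l hl hach
    obtain ⟨b', hb'ach, hb'top, hb'A⟩ := hopt (Oj O j l)
    rw [symm_Oj O j l] at hb'ach hb'top
    by_cases hbb : b' = b
    · rw [hb'A, hbb]
    · exfalso
      have h1 : P j b' b := hb'top b hach (fun h => hbb h.symm)
      have hb'0 : achievable O A j t0 b' := by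
        refine ach_mono t0 (tau O j l) b' ?_ hb'ach
        rw [ht0]
        exact (tau_strictMono O j).monotone hl
      have h2 : P j b b' := hbtop b' hb'0 hbb
      exact hasymm _ _ h2 h1
  -- b is achievable at each of j's times from position lK on
  have ach_all : ∀ m : ℕ, ∀ l : Fin p, (l : ℕ) = m → lK ≤ l →
      achievable O A j (tau O j l) b := by
    intro m
    induction m using Nat.strong_induction_on with
    | _ m IH =>
      intro l hlm hl
      rcases eq_or_lt_of_le hl with heq | hlt
      · rw [← heq, ← ht0]; exact hbach
      · constructor
        · intro c hc
          obtain ⟨l', hl'⟩ := exists_Oj O j c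
          rw [← hl'] at hc ⊢
          rw [symm_Oj O j l'] at hc
          have hl'l : l' < l := (tau_strictMono O j).lt_iff_lt.mp hc
          by_cases hl'K : l' < lK
          · refine hbach.1 (Oj O j l') ?_
            rw [symm_Oj O j l', ht0]
            exact tau_strictMono O j hl'K
          · have hKl' : lK ≤ l' := le_of_not_gt hl'K
            have hach' : achievable O A j (tau O j l') b :=
              IH (l' : ℕ) (by subst hlm; exact hl'l) l' rfl hKl'
            exact (step l' hKl' hach').symm
        · intro c hc j' hj'lt heq
          obtain ⟨l'', hl''⟩ := exists_Oj O j c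
          rw [← hl''] at hc heq hj'lt
          rw [symm_Oj O j l''] at hc
          have hll'' : l ≤ l'' := le_of_not_gt (fun h => hc (tau_strictMono O j h))
          have hKl'' : lK < l'' := lt_of_lt_of_le hlt hll''
          by_cases h1 : O.symm (j', Oj O j l'') < t0
          · refine hbach.2 (Oj O j l'') ?_ j' h1 heq
            rw [symm_Oj O j l'', ht0]
            exact fun h => absurd ((tau_strictMono O j).lt_iff_lt.mp h)
              (not_lt.mpr (le_of_lt hKl''))
          · have hj'j : j' ≠ j := by
              intro h
              rw [h, symm_Oj O j l''] at hj'lt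
              exact absurd ((tau_strictMono O j).lt_iff_lt.mp hj'lt)
                (not_lt.mpr hll'')
            have hne : O.symm (j', Oj O j l'') ≠ t0 := by
              intro h
              exact hj'j (congrArg Prod.fst (O.symm.injective (h.trans ht0def)))
            have h2 : t0 < O.symm (j', Oj O j l'') :=
              lt_of_le_of_ne (le_of_not_gt h1) (Ne.symm hne)
            have h3 : O.symm (j', Oj O j l'') < O.symm (j, Oj O j l'') := by
              rw [symm_Oj O j l'']
              exact lt_of_lt_of_le hj'lt ((tau_strictMono O j).monotone hll'')
            exact hNI lK hlKval l'' hKl'' j' hj'j ⟨h2, h3⟩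
  -- the final bundle of j is b
  have hAb : A j = b := by
    funext c
    obtain ⟨l', hl'⟩ := exists_Oj O j c
    rw [← hl']
    by_cases h : l' < lK
    · refine (hbach.1 (Oj O j l') ?_).symm
      rw [symm_Oj O j l', ht0]
      exact tau_strictMono O j h
    · exact step l' (le_of_not_gt h) (ach_all (l' : ℕ) l' rfl (le_of_not_gt h))
  -- the counting part
  set S : Fin p → Finset (Fin n) := fun c =>
    if O.symm (j, c) < t0 then {A j c}
    else Finset.univ.filter fun d => ∀ j', O.symm (j', c) < t0 → A j' c ≠ d
    with hSdef
  have hScard : ∀ c : Fin p, ¬ O.symm (j, c) < t0 → kval O j c ≤ (S c).card := by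
    intro c hc
    have hSc : (((Finset.univ.filter fun j' : Fin n => O.symm (j', c) < t0).image
        (fun j' => A j' c))ᶜ : Finset (Fin n)) ⊆ S c := by
      intro d hd
      simp only [Finset.mem_compl, Finset.mem_image, not_exists, not_and] at hd
      simp only [hSdef]
      rw [if_neg hc]
      simp only [Finset.mem_filter, Finset.mem_univ, true_and]
      intro j' hj'
      exact hd j' (Finset.mem_filter.mpr ⟨Finset.mem_univ _, hj'⟩)
    set E : Finset (Fin n) := Finset.univ.filter fun j' : Fin n => O.symm (j', c) < t0 with hEdef
    set E' : Finset (Fin n) := Finset.univ.filter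
      fun j' : Fin n => O.symm (j', c) < O.symm (j, c) with hE'def
    set L : Finset (Fin n) := Finset.univ.filter
      fun j' : Fin n => O.symm (j, c) < O.symm (j', c) with hLdef
    have hEE' : E ⊆ E' := by
      intro x hx
      simp only [hEdef, hE'def, Finset.mem_filter, Finset.mem_univ, true_and] at hx ⊢
      exact lt_of_lt_of_le hx (le_of_not_gt hc)
    have hdisj : Disjoint E' (L ∪ {j}) := by
      rw [Finset.disjoint_left]
      intro x hx hx2
      simp only [hE'def, Finset.mem_filter, Finset.mem_univ, true_and] at hx
      rcases Finset.mem_union.mp hx2 with h | h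
      · simp only [hLdef, Finset.mem_filter, Finset.mem_univ, true_and] at h
        exact absurd hx (not_lt.mpr (le_of_lt h))
      · rw [Finset.mem_singleton.mp h] at hx
        exact absurd hx (lt_irrefl _)
    have hdisj2 : Disjoint L ({j} : Finset (Fin n)) := by
      rw [Finset.disjoint_left]
      intro x hx hx2
      simp only [hLdef, Finset.mem_filter, Finset.mem_univ, true_and] at hx
      rw [Finset.mem_singleton.mp hx2] at hx
      exact absurd hx (lt_irrefl _)
    have hun : (E' ∪ (L ∪ {j})).card ≤ n := by
      have := Finset.card_le_univ (E' ∪ (L ∪ {j}))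
      simpa using this
    rw [Finset.card_union_of_disjoint hdisj, Finset.card_union_of_disjoint hdisj2,
      Finset.card_singleton] at hun
    have hcomp : n - (E.image (fun j' => A j' c)).card ≤ (S c).card := by
      have := Finset.card_le_card hSc
      rwa [Finset.card_compl, Fintype.card_fin] at this
    have him : (E.image (fun j' => A j' c)).card ≤ E.card := Finset.card_image_le
    have hEcard : E.card ≤ E'.card := Finset.card_le_card hEE'
    have hkd : kval O j c = 1 + L.card := rfl
    omega
  have hpi : Fintype.piFinset S ⊆ Finset.univ.filter (fun x => ¬ P j x (A j)) := by
    intro x hx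
    have hach : achievable O A j t0 x := by
      constructor
      · intro c hc
        have := Fintype.mem_piFinset.mp hx c
        simp only [hSdef, if_pos hc] at this
        exact Finset.mem_singleton.mp this
      · intro c hc
        have := Fintype.mem_piFinset.mp hx c
        simp only [hSdef] at this
        rw [if_neg hc, Finset.mem_filter] at this
        exact fun j' h => this.2 j' h
    rw [Finset.mem_filter]
    refine ⟨Finset.mem_univ _, ?_⟩
    rw [hAb]
    by_cases hxb : x = b
    · rw [hxb]; exact irrefl_of (P j) b
    · exact hasymm _ _ (hbtop x hach hxb)
  have hcard1 : optProd O j ≤ (Fintype.piFinset S).card := by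
    rw [Fintype.card_piFinset]
    have h1 : optProd O j ≤ ∏ l ∈ Finset.univ.filter (fun l : Fin p => Kval O j ≤ (l : ℕ)),
        (S (Oj O j l)).card := by
      refine Finset.prod_le_prod (fun _ _ => Nat.zero_le _) ?_
      intro l hl
      refine hScard (Oj O j l) ?_
      rw [symm_Oj O j l, ht0]
      intro h
      have := (tau_strictMono O j).lt_iff_lt.mp h
      have h2 : (l : ℕ) < Kval O j := this
      exact absurd (Finset.mem_filter.mp hl).2 (not_le.mpr h2)
    have h2 : ∏ l ∈ Finset.univ.filter (fun l : Fin p => Kval O j ≤ (l : ℕ)),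
        (S (Oj O j l)).card
        = ∏ c ∈ (Finset.univ.filter (fun l : Fin p => Kval O j ≤ (l : ℕ))).image (Oj O j),
          (S c).card := by
      rw [Finset.prod_image (fun a _ b _ h => Oj_injective O j h)]
    have h3 : ∏ c ∈ (Finset.univ.filter (fun l : Fin p => Kval O j ≤ (l : ℕ))).image (Oj O j),
        (S c).card ≤ ∏ c : Fin p, (S c).card := by
      refine Finset.prod_le_prod_of_subset_of_one_le' (Finset.subset_univ _) ?_
      intro c _ _
      by_cases hc : O.symm (j, c) < t0
      · simp only [hSdef]; rw [if_pos hc]; simp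
      · have := hScard c hc
        have hk : 1 ≤ kval O j c := Nat.le_add_right 1 _
        omega
    exact le_trans h1 (h2 ▸ h3)
  have hT : optProd O j ≤ (Finset.univ.filter fun x : Bundle n p => ¬ P j x (A j)).card :=
    le_trans hcard1 (Finset.card_le_card hpi)
  have hsplit : (Finset.univ.filter fun x : Bundle n p => P j x (A j)).card
      + (Finset.univ.filter fun x : Bundle n p => ¬ P j x (A j)).card = n ^ p := by
    rw [Finset.card_filter_add_card_filter_not, Finset.card_univ]
    simp [Fintype.card_fun]
  unfold rank
  omega
end

section
/- In a categorial sequential allocation mechanism, if agent j is pessimistic then for every profile the rank of the bundle allocated to her is at most n^p − ∑_{l=1}^{p} (k_{j, O_j(l)} − 1); equivalently, her bundle is ranked no lower than the (1 + ∑_{l=1}^{p}(k_{j,O_j(l)} − 1))-th position from the bottom of her preference order over the n^p bundles. -/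
open scoped Classical

namespace St8aux

variable {n p : ℕ}

/-- The set of rounds at which agent `j` picks. -/
noncomputable def ojSet (O : Csam n p) (j : Fin n) : Finset (Fin (n * p)) :=
  Finset.univ.image fun i : Fin p => O.symm (j, i)

lemma ojSet_card (O : Csam n p) (j : Fin n) : (ojSet O j).card = p := by
  rw [ojSet, Finset.card_image_of_injective _
    (fun a b h => congrArg Prod.snd (O.symm.injective h))]
  simp

lemma Oj_round (O : Csam n p) (j : Fin n) (l : Fin p) :
    O.symm (j, Oj O j l) = ((ojSet O j).orderIsoOfFin (ojSet_card O j) l : Fin (n * p)) := by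
  have hx : Oj O j l
      = (O (((ojSet O j).orderIsoOfFin (ojSet_card O j) l) : Fin (n * p))).2 := rfl
  obtain ⟨i, -, hi⟩ :=
    Finset.mem_image.mp (((ojSet O j).orderIsoOfFin (ojSet_card O j) l).2)
  rw [hx, ← hi, Equiv.apply_symm_apply]

lemma Oj_round_lt (O : Csam n p) (j : Fin n) {l l' : Fin p} (h : l < l') :
    O.symm (j, Oj O j l) < O.symm (j, Oj O j l') := by
  rw [Oj_round, Oj_round]
  exact_mod_cast ((ojSet O j).orderIsoOfFin (ojSet_card O j)).strictMono h

lemma achievable_self (O : Csam n p) (A : Fin n → Bundle n p) (hA : ValidAlloc A)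
    (j : Fin n) (t : Fin (n * p)) : achievable O A j t (A j) := by
  refine ⟨fun c _ => rfl, fun c hc j' hj' heq => ?_⟩
  have : j' = j := hA c heq
  subst this; exact hc hj'

lemma avail_card (O : Csam n p) (A : Fin n → Bundle n p) (hA : ValidAlloc A)
    (j : Fin n) (i : Fin p) :
    kval O j i ≤ (Finset.univ.filter fun d => availAt O A (O.symm (j, i)) i d).card := by
  classical
  set t := O.symm (j, i) with ht
  set F := Finset.univ.filter fun d => availAt O A t i d with hF
  set Before := Finset.univ.filter fun j' : Fin n => O.symm (j', i) < t with hB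
  set After := Finset.univ.filter fun j' : Fin n => t < O.symm (j', i) with hAf
  -- complement of F is covered by items taken before
  have hsub : Finset.univ \ F ⊆ Before.image fun j' => A j' i := by
    intro d hd
    rw [Finset.mem_sdiff, hF, Finset.mem_filter] at hd
    have hna : ¬ availAt O A t i d := fun h => hd.2 ⟨Finset.mem_univ d, h⟩
    rw [availAt] at hna
    push_neg at hna
    obtain ⟨j', hj', heq⟩ := hna
    exact Finset.mem_image.mpr ⟨j', Finset.mem_filter.mpr ⟨Finset.mem_univ _, hj'⟩, heq⟩
  have h1 : (Finset.univ \ F).card ≤ Before.card :=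
    (Finset.card_le_card hsub).trans (Finset.card_image_le)
  -- partition of agents
  have hpart : Before.card + 1 + After.card = n := by
    have hnot : Finset.univ.filter (fun j' : Fin n => ¬ O.symm (j', i) < t)
        = insert j After := by
      ext j'
      simp only [Finset.mem_filter, Finset.mem_univ, true_and, Finset.mem_insert, hAf,
        not_lt]
      constructor
      · intro h
        rcases lt_or_eq_of_le h with h | h
        · exact Or.inr h
        · left
          have : O.symm (j', i) = O.symm (j, i) := h.symm
          exact congrArg Prod.fst (O.symm.injective this)
      · rintro (rfl | h)
        · exact le_of_eq rfl
        · exact le_of_lt h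
    have hj_notin : j ∉ After := by
      simp [hAf, ht]
    have := Finset.card_filter_add_card_filter_not
      (s := (Finset.univ : Finset (Fin n))) (p := fun j' : Fin n => O.symm (j', i) < t)
    rw [hnot, Finset.card_insert_of_notMem hj_notin, Finset.card_univ,
      Fintype.card_fin, ← hB] at this
    omega
  have h2 : (Finset.univ \ F).card = n - F.card := by
    rw [Finset.card_sdiff_of_subset (Finset.subset_univ F), Finset.card_univ, Fintype.card_fin]
  have h3 : F.card ≤ n := by
    simpa using Finset.card_le_card (Finset.subset_univ F)
  have hk : kval O j i = 1 + After.card := by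
    rw [kval, hAf, ht]
  omega

lemma alt_card (O : Csam n p) (A : Fin n → Bundle n p) (hA : ValidAlloc A)
    (j : Fin n) (i : Fin p) :
    kval O j i - 1 ≤ (Finset.univ.filter fun d =>
      availAt O A (O.symm (j, i)) i d ∧ d ≠ A j i).card := by
  classical
  have hsub : (Finset.univ.filter fun d => availAt O A (O.symm (j, i)) i d) ⊆
      insert (A j i) (Finset.univ.filter fun d =>
        availAt O A (O.symm (j, i)) i d ∧ d ≠ A j i) := by
    intro d hd
    rw [Finset.mem_filter] at hd
    by_cases h : d = A j i
    · exact Finset.mem_insert.mpr (Or.inl h)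
    · exact Finset.mem_insert.mpr (Or.inr (Finset.mem_filter.mpr ⟨hd.1, hd.2, h⟩))
  have := (avail_card O A hA j i).trans
    ((Finset.card_le_card hsub).trans (Finset.card_insert_le _ _))
  omega

end St8aux

theorem statement8 (n p : ℕ) (hn : 0 < n) (hp : 0 < p) (O : Csam n p)
    (P : Profile n p) (hP : ValidProfile P)
    (A : Fin n → Bundle n p) (hA : ValidAlloc A)
    (isOpt : Fin n → Bool)
    (hplay : ∀ j : Fin n, (isOpt j = true → OptPlays O P A j) ∧
      (isOpt j = false → PesPlays O P A j))
    (j : Fin n) (hj : isOpt j = false) :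
    rank (P j) (A j) ≤ n ^ p - pesSum O j := by
  classical
  haveI hSTO : IsStrictTotalOrder (Bundle n p) (P j) := hP j
  have hpess : PesPlays O P A j := (hplay j).2 hj
  -- the final bundle is always achievable at agent j's own rounds
  have hach : ∀ i : Fin p, achievable O A j (O.symm (j, i)) (A j) :=
    fun i => St8aux.achievable_self O A hA j _
  -- witnesses worse than A j
  have hW : ∀ l : Fin p, ∀ d : Fin n,
      availAt O A (O.symm (j, Oj O j l)) (Oj O j l) d → d ≠ A j (Oj O j l) →
      ∃ w' : Bundle n p, achievable O A j (O.symm (j, Oj O j l)) w' ∧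
        w' (Oj O j l) = d ∧ P j (A j) w' := by
    intro l d h1 h2
    obtain ⟨w', hw1, hw2, hw3⟩ := hpess (Oj O j l) d h1 h2
    exact ⟨w', hw1, hw2, hw3 (A j) (hach _) rfl⟩
  choose! wfun hw1 hw2 hw3 using hW
  set D : Fin p → Finset (Fin n) := fun l => Finset.univ.filter fun d =>
    availAt O A (O.symm (j, Oj O j l)) (Oj O j l) d ∧ d ≠ A j (Oj O j l) with hD
  have hDmem : ∀ {l : Fin p} {d : Fin n}, d ∈ D l →
      availAt O A (O.symm (j, Oj O j l)) (Oj O j l) d ∧ d ≠ A j (Oj O j l) := by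
    intro l d hd
    exact (Finset.mem_filter.mp hd).2
  set S : Finset ((_ : Fin p) × Fin n) := Finset.univ.sigma D with hS
  set W : Finset (Bundle n p) := Finset.univ.filter fun c => P j (A j) c with hWdef
  -- the witness map is injective on S with values in W
  have hmaps : ∀ x ∈ S, wfun x.1 x.2 ∈ W := by
    rintro ⟨l, d⟩ hx
    have hd := hDmem (Finset.mem_sigma.mp hx).2
    exact Finset.mem_filter.mpr ⟨Finset.mem_univ _, hw3 l d hd.1 hd.2⟩
  have hinj : ∀ x ∈ S, ∀ y ∈ S, wfun x.1 x.2 = wfun y.1 y.2 → x = y := by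
    rintro ⟨l, d⟩ hx ⟨l', d'⟩ hy heq
    have hd := hDmem (Finset.mem_sigma.mp hx).2
    have hd' := hDmem (Finset.mem_sigma.mp hy).2
    have key : ∀ l₁ l₂ : Fin p, l₁ < l₂ →
        ∀ d₁ ∈ D l₁, ∀ d₂ ∈ D l₂, wfun l₁ d₁ ≠ wfun l₂ d₂ := by
      intro l₁ l₂ h12 d₁ hd₁ d₂ hd₂ he
      have h₁ := hDmem hd₁
      have h₂ := hDmem hd₂
      have hach₂ := hw1 l₂ d₂ h₂.1 h₂.2
      have hlt := St8aux.Oj_round_lt O j h12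
      have hval : wfun l₂ d₂ (Oj O j l₁) = A j (Oj O j l₁) := hach₂.1 _ hlt
      have hval₁ : wfun l₁ d₁ (Oj O j l₁) = d₁ := hw2 l₁ d₁ h₁.1 h₁.2
      rw [he, hval] at hval₁
      exact h₁.2 hval₁.symm
    rcases lt_trichotomy l l' with h | h | h
    · exact absurd heq (key l l' h d (Finset.mem_sigma.mp hx).2 d' (Finset.mem_sigma.mp hy).2)
    · subst h
      have : d = d' := by
        have h1 : wfun l d (Oj O j l) = d := hw2 l d hd.1 hd.2
        have h2 : wfun l d' (Oj O j l) = d' := hw2 l d' hd'.1 hd'.2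
        rw [← h1, ← h2, heq]
      rw [this]
    · exact absurd heq.symm
        (key l' l h d' (Finset.mem_sigma.mp hy).2 d (Finset.mem_sigma.mp hx).2)
  have hcardSW : S.card ≤ W.card :=
    Finset.card_le_card_of_injOn (fun x => wfun x.1 x.2) hmaps hinj
  have hScard : pesSum O j ≤ S.card := by
    rw [hS, Finset.card_sigma, pesSum]
    exact Finset.sum_le_sum fun l _ => St8aux.alt_card O A hA j (Oj O j l)
  have hWcard : pesSum O j ≤ W.card := hScard.trans hcardSW
  -- now count: better set + worse set + {A j} fit in all bundles
  set B : Finset (Bundle n p) := Finset.univ.filter fun c => P j c (A j) with hBdef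
  have hdisj : Disjoint B W := by
    rw [Finset.disjoint_left]
    intro c hcB hcW
    have h1 : P j c (A j) := (Finset.mem_filter.mp hcB).2
    have h2 : P j (A j) c := (Finset.mem_filter.mp hcW).2
    exact irrefl_of (P j) c (trans_of (P j) h1 h2)
  have hnotin : A j ∉ B ∪ W := by
    intro h
    rcases Finset.mem_union.mp h with h | h
    · exact irrefl_of (P j) (A j) (Finset.mem_filter.mp h).2
    · exact irrefl_of (P j) (A j) (Finset.mem_filter.mp h).2
  have hcount : B.card + W.card + 1 ≤ n ^ p := by
    have h1 : (insert (A j) (B ∪ W)).card = B.card + W.card + 1 := by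
      rw [Finset.card_insert_of_notMem hnotin, Finset.card_union_of_disjoint hdisj]
    have h2 := Finset.card_le_univ (insert (A j) (B ∪ W))
    have h3 : Fintype.card (Bundle n p) = n ^ p := by
      simp [Bundle]
    omega
  have hrank : rank (P j) (A j) = 1 + B.card := rfl
  omega
end

section
/- Among all categorial sequential allocation mechanisms with all-optimistic agents, serial dictatorships achieve the minimum possible worst-case utilitarian rank, which equals n(n^p + 1) − ∑_{j=1}^{n} j^p, where the worst-case utilitarian rank of f_O is the maximum over profiles of the sum over agents of the rank of the bundle they receive. -/
open scoped Classical

/-- `O` is a serial dictatorship order: there is an order `σ` of the agents such that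
all picks of an earlier agent precede all picks of a later agent. -/
def IsSerialDict {n p : ℕ} (O : Csam n p) : Prop :=
  ∃ σ : Fin n ≃ Fin n, ∀ j j' : Fin n, ∀ i i' : Fin p, j ≠ j' →
    (O.symm (j, i) < O.symm (j', i') ↔ σ j < σ j')

section Help
variable {n p : ℕ}

lemma finj_card (O : Csam n p) (j : Fin n) :
    (Finset.univ.image fun i : Fin p => O.symm (j, i)).card = p := by
  rw [Finset.card_image_of_injective _
    (fun a b h => congrArg Prod.snd (O.symm.injective h))]
  simp

lemma Oj_symm (O : Csam n p) (j : Fin n) (l : Fin p) :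
    O.symm (j, Oj O j l) =
      (((Finset.univ.image fun i : Fin p => O.symm (j, i)).orderIsoOfFin
        (finj_card O j) l : Fin (n * p))) := by
  have hmem := ((Finset.univ.image fun i : Fin p => O.symm (j, i)).orderIsoOfFin
        (finj_card O j) l).2
  obtain ⟨i, -, hi⟩ := Finset.mem_image.1 hmem
  have hOs : O (((Finset.univ.image fun i : Fin p => O.symm (j, i)).orderIsoOfFin
      (finj_card O j) l : Fin (n * p))) = (j, i) := by
    rw [← hi]; simp
  show O.symm (j, (O _).2) = _
  rw [hOs]
  exact hi

lemma tR_lt_tR (O : Csam n p) (j : Fin n) {l l' : Fin p} :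
    O.symm (j, Oj O j l) < O.symm (j, Oj O j l') ↔ l < l' := by
  rw [Oj_symm, Oj_symm]
  exact (Finset.orderIsoOfFin _ (finj_card O j)).lt_iff_lt

lemma tR_le_tR (O : Csam n p) (j : Fin n) {l l' : Fin p} :
    O.symm (j, Oj O j l) ≤ O.symm (j, Oj O j l') ↔ l ≤ l' := by
  rw [Oj_symm, Oj_symm]
  exact (Finset.orderIsoOfFin _ (finj_card O j)).le_iff_le

lemma Oj_inj (O : Csam n p) (j : Fin n) : Function.Injective (Oj O j) := by
  intro a b h
  have : O.symm (j, Oj O j a) = O.symm (j, Oj O j b) := by rw [h]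
  by_contra hne
  rcases lt_or_gt_of_ne hne with h' | h'
  · exact absurd this (ne_of_lt ((tR_lt_tR O j).2 h'))
  · exact absurd this.symm (ne_of_lt ((tR_lt_tR O j).2 h'))

lemma Oj_surj (O : Csam n p) (j : Fin n) : Function.Surjective (Oj O j) := by
  intro i
  have hmem : O.symm (j, i) ∈ (Finset.univ.image fun i : Fin p => O.symm (j, i)) :=
    Finset.mem_image.2 ⟨i, Finset.mem_univ _, rfl⟩
  obtain ⟨l, hl⟩ := (Finset.orderIsoOfFin _ (finj_card O j)).surjective ⟨_, hmem⟩
  refine ⟨l, ?_⟩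
  show (O _).2 = i
  have : (((Finset.univ.image fun i : Fin p => O.symm (j, i)).orderIsoOfFin
      (finj_card O j) l : Fin (n * p))) = O.symm (j, i) := by rw [hl]
  rw [this]; simp


lemma achievable_self (O : Csam n p) {A : Fin n → Bundle n p} (hA : ValidAlloc A)
    (j : Fin n) (t : Fin (n * p)) : achievable O A j t (A j) := by
  constructor
  · intro c _; rfl
  · intro c hc j' hj' heq
    rcases eq_or_ne j' j with rfl | hne
    · exact hc hj'
    · exact hne (hA c heq)

lemma achievable_anti (O : Csam n p) {A : Fin n → Bundle n p} (hA : ValidAlloc A)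
    {j : Fin n} {t t' : Fin (n * p)} (htt : t ≤ t') {b : Bundle n p}
    (hb : achievable O A j t' b) : achievable O A j t b := by
  constructor
  · intro c hc; exact hb.1 c (lt_of_lt_of_le hc htt)
  · intro c hc
    by_cases hc' : O.symm (j, c) < t'
    · rw [hb.1 c hc']
      exact (achievable_self O hA j t).2 c hc
    · intro j' hj'; exact hb.2 c hc' j' (lt_of_lt_of_le hj' htt)

lemma card_filter_lt_fin {q : ℕ} (x : Fin q) :
    (Finset.univ.filter fun m : Fin q => m < x).card = (x : ℕ) := by
  have : (Finset.univ.filter fun m : Fin q => m < x) = Finset.Iio x := by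
    ext m; simp
  rw [this, Fin.card_Iio]

lemma card_filter_le_fin {q : ℕ} (x : Fin q) :
    (Finset.univ.filter fun m : Fin q => m ≤ x).card = (x : ℕ) + 1 := by
  have : (Finset.univ.filter fun m : Fin q => m ≤ x) = Finset.Iic x := by
    ext m; simp
  rw [this, Fin.card_Iic]

lemma mem_iff_lt_card_of_dc {q : ℕ} (F : Finset (Fin q))
    (hdc : ∀ a b : Fin q, a ≤ b → b ∈ F → a ∈ F) (l : Fin q) :
    l ∈ F ↔ (l : ℕ) < F.card := by
  constructor
  · intro hl
    have hsub : (Finset.univ.filter fun m : Fin q => m ≤ l) ⊆ F := by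
      intro m hm; exact hdc m l (Finset.mem_filter.1 hm).2 hl
    have h1 := Finset.card_le_card hsub
    rw [card_filter_le_fin] at h1; omega
  · intro hl
    by_contra hnl
    have hsub : F ⊆ Finset.univ.filter fun m : Fin q => m < l := by
      intro b hb
      refine Finset.mem_filter.2 ⟨Finset.mem_univ _, ?_⟩
      by_contra hb'
      exact hnl (hdc l b (le_of_not_gt hb') hb)
    have h1 := Finset.card_le_card hsub
    rw [card_filter_lt_fin] at h1; omega


lemma part1 (hn : 0 < n) (hp : 0 < p) (O : Csam n p) (hSD : IsSerialDict O)
    (P : Profile n p) (hP : ValidProfile P) (A : Fin n → Bundle n p) (hA : ValidAlloc A)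
    (hOpt : ∀ j, OptPlays O P A j) :
    ∑ j : Fin n, rank (P j) (A j) ≤
      n * (n ^ p + 1) - ∑ j ∈ Finset.range n, (j + 1) ^ p := by
  obtain ⟨σ, hσ⟩ := hSD
  have hcard_univ : (Finset.univ : Finset (Bundle n p)).card = n ^ p := by
    rw [Finset.card_univ]
    simp [Fintype.card_fun]
  have key : ∀ j : Fin n, rank (P j) (A j) + (n - (σ j : ℕ)) ^ p ≤ n ^ p + 1 := by
    intro j
    set l0 : Fin p := ⟨0, hp⟩ with hl0
    set i0 : Fin p := Oj O j l0 with hi0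
    set t0 : Fin (n * p) := O.symm (j, i0) with ht0
    have asym : ∀ x y : Bundle n p, P j x y → P j y x → False := by
      intro x y h1 h2
      exact (hP j).toIsStrictOrder.toIrrefl.irrefl x
        ((hP j).toIsStrictOrder.toIsTrans.trans x y x h1 h2)
    have h0 : ∀ c : Fin p, ¬ O.symm (j, c) < t0 := by
      intro c hc
      obtain ⟨l, rfl⟩ := Oj_surj O j c
      have := (tR_lt_tR O j).1 hc
      rw [Fin.lt_def] at this
      simp [hl0] at this
    obtain ⟨b, hbach, hbtop, hbcomp⟩ := hOpt j i0
    have main : ∀ N : ℕ, ∀ l : Fin p, (l : ℕ) = N → A j (Oj O j l) = b (Oj O j l) := by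
      intro N
      induction N using Nat.strong_induction_on with
      | _ N IH =>
        intro l hl
        have hbSl : achievable O A j (O.symm (j, Oj O j l)) b := by
          constructor
          · intro c hc
            obtain ⟨l', rfl⟩ := Oj_surj O j c
            have hl' : l' < l := (tR_lt_tR O j).1 hc
            rw [Fin.lt_def] at hl'
            exact (IH l'.1 (by omega) l' rfl).symm
          · intro c hc j'' hj'' heq
            rcases eq_or_ne j'' j with rfl | hne
            · exact hc hj''
            · have h1 : O.symm (j'', c) < t0 :=
                (hσ j'' j c i0 hne).2 ((hσ j'' j c (Oj O j l) hne).1 hj'')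
              exact hbach.2 c (h0 c) j'' h1 heq
        obtain ⟨b', hb'ach, hb'top, hb'comp⟩ := hOpt j (Oj O j l)
        have hb'0 : achievable O A j t0 b' := by
          refine achievable_anti O hA ?_ hb'ach
          exact (tR_le_tR O j).2 (by rw [Fin.le_def]; simp [hl0])
        have hbb : b' = b := by
          by_contra hne
          exact asym _ _ (hbtop b' hb'0 hne) (hb'top b hbSl (Ne.symm hne))
        rw [hb'comp, hbb]
    have hAb : A j = b := funext fun c => by
      obtain ⟨l, rfl⟩ := Oj_surj O j c; exact main l.1 l rfl
    set S0 : Finset (Bundle n p) := Finset.univ.filter (fun x => achievable O A j t0 x)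
      with hS0
    have hdisj : ∀ x ∈ S0, ¬ P j x (A j) := by
      intro x hx hPx
      rw [hAb] at hPx
      rcases eq_or_ne x b with rfl | hne
      · exact (hP j).toIsStrictOrder.toIrrefl.irrefl x hPx
      · exact asym _ _ (hbtop x (Finset.mem_filter.1 hx).2 hne) hPx
    have hf : (Finset.univ.filter fun c => P j c (A j)).card + S0.card ≤ n ^ p := by
      rw [← Finset.card_union_of_disjoint (by
        rw [Finset.disjoint_left]
        intro x hx hx2
        exact hdisj x hx2 (Finset.mem_filter.1 hx).2)]
      rw [← hcard_univ]
      exact Finset.card_le_card (Finset.subset_univ _)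
    set V : Fin p → Finset (Fin n) := fun c => Finset.univ.filter (fun d => availAt O A t0 c d)
      with hV
    have hpi : Fintype.piFinset V ⊆ S0 := by
      intro x hx
      refine Finset.mem_filter.2 ⟨Finset.mem_univ _, ?_, ?_⟩
      · intro c hc; exact absurd hc (h0 c)
      · intro c _; exact (Finset.mem_filter.1 (Fintype.mem_piFinset.1 hx c)).2
    have hVc : ∀ c : Fin p, n - (σ j : ℕ) ≤ (V c).card := by
      intro c
      set Tkn : Finset (Fin n) :=
        (Finset.univ.filter fun j'' : Fin n => O.symm (j'', c) < t0).image fun j'' => A j'' c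
        with hTkn
      have hsub : Finset.univ \ Tkn ⊆ V c := by
        intro d hd
        rw [Finset.mem_sdiff] at hd
        refine Finset.mem_filter.2 ⟨Finset.mem_univ _, ?_⟩
        intro j'' hj'' heq
        exact hd.2 (Finset.mem_image.2 ⟨j'', Finset.mem_filter.2 ⟨Finset.mem_univ _, hj''⟩, heq⟩)
      have h1 : Tkn.card ≤ (σ j : ℕ) := by
        calc Tkn.card ≤ (Finset.univ.filter fun j'' : Fin n => O.symm (j'', c) < t0).card :=
              Finset.card_image_le
          _ ≤ (Finset.univ.filter fun j'' : Fin n => σ j'' < σ j).card := by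
              apply Finset.card_le_card
              intro j'' hj''
              rw [Finset.mem_filter] at hj'' ⊢
              refine ⟨Finset.mem_univ _, ?_⟩
              rcases eq_or_ne j'' j with rfl | hne
              · exact absurd hj''.2 (h0 c)
              · exact (hσ j'' j c i0 hne).1 hj''.2
          _ = (Finset.univ.filter fun m : Fin n => m < σ j).card := by
              apply Finset.card_bij (fun a _ => σ a)
              · intro a ha
                rw [Finset.mem_filter] at ha ⊢
                exact ⟨Finset.mem_univ _, ha.2⟩
              · intro a _ b2 _ h; exact σ.injective h
              · intro m hm
                rw [Finset.mem_filter] at hm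
                exact ⟨σ.symm m, Finset.mem_filter.2 ⟨Finset.mem_univ _, by simpa using hm.2⟩,
                  by simp⟩
          _ = (σ j : ℕ) := card_filter_lt_fin _
      calc n - (σ j : ℕ) ≤ n - Tkn.card := Nat.sub_le_sub_left h1 n
        _ = (Finset.univ \ Tkn).card := by
            rw [Finset.card_sdiff_of_subset (Finset.subset_univ _), Finset.card_univ, Fintype.card_fin]
        _ ≤ (V c).card := Finset.card_le_card hsub
    have h2 : (n - (σ j : ℕ)) ^ p ≤ S0.card := by
      calc (n - (σ j : ℕ)) ^ p = ∏ _c : Fin p, (n - (σ j : ℕ)) := by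
            rw [Finset.prod_const, Finset.card_univ, Fintype.card_fin]
        _ ≤ ∏ c, (V c).card := Finset.prod_le_prod' (fun c _ => hVc c)
        _ = (Fintype.piFinset V).card := (Fintype.card_piFinset V).symm
        _ ≤ S0.card := Finset.card_le_card hpi
    have : rank (P j) (A j) = 1 + (Finset.univ.filter fun c => P j c (A j)).card := rfl
    omega
  have hsum1 : ∑ j : Fin n, rank (P j) (A j) + ∑ j : Fin n, (n - (σ j : ℕ)) ^ p ≤
      n * (n ^ p + 1) := by
    rw [← Finset.sum_add_distrib]
    calc ∑ j : Fin n, (rank (P j) (A j) + (n - (σ j : ℕ)) ^ p)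
        ≤ ∑ _j : Fin n, (n ^ p + 1) := Finset.sum_le_sum (fun j _ => key j)
      _ = n * (n ^ p + 1) := by
          rw [Finset.sum_const, Finset.card_univ, Fintype.card_fin, smul_eq_mul]
  have hsum2 : ∑ j : Fin n, (n - (σ j : ℕ)) ^ p = ∑ m ∈ Finset.range n, (m + 1) ^ p := by
    rw [show (∑ j : Fin n, (n - (σ j : ℕ)) ^ p) = ∑ j : Fin n, (n - (j : ℕ)) ^ p from
      Equiv.sum_comp σ (fun m : Fin n => (n - (m : ℕ)) ^ p)]
    rw [Fin.sum_univ_eq_sum_range (fun m => (n - m) ^ p)]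
    rw [← Finset.sum_range_reflect (fun m => (m + 1) ^ p) n]
    apply Finset.sum_congr rfl
    intro m hm
    rw [Finset.mem_range] at hm
    congr 1
    omega
  omega


def AA (n p : ℕ) : Fin n → Bundle n p := fun j _ => j

lemma AA_valid : ValidAlloc (AA n p) := fun _ _ _ h => h

lemma Kval_mem (O : Csam n p) (hp : 0 < p) (j : Fin n) :
    Kval O j < p ∧ NoInterruptF O j (Kval O j) := by
  have hne : {K : ℕ | K < p ∧ NoInterruptF O j K}.Nonempty := by
    refine ⟨p - 1, by omega, ?_⟩
    intro lK hlK l hl j' hj' hpair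
    have h1 := l.isLt
    rw [Fin.lt_def] at hl
    omega
  exact Nat.sInf_mem hne

lemma Kval_not (O : Csam n p) (hp : 0 < p) (j : Fin n) {m : ℕ}
    (hm : m < Kval O j) : ¬ NoInterruptF O j m := by
  intro hNI
  have h2 : m ∈ {K : ℕ | K < p ∧ NoInterruptF O j K} :=
    ⟨lt_trans hm (Kval_mem O hp j).1, hNI⟩
  have h3 : Kval O j ≤ m := Nat.sInf_le h2
  omega

noncomputable def KF (O : Csam n p) (hp : 0 < p) (j : Fin n) : Fin p :=
  ⟨Kval O j, (Kval_mem O hp j).1⟩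

noncomputable def TT (O : Csam n p) (hp : 0 < p) (j : Fin n) : Fin (n * p) :=
  O.symm (j, Oj O j (KF O hp j))

lemma interrupt_exists (O : Csam n p) (hp : 0 < p) (j : Fin n) (m : Fin p)
    (hm : (m : ℕ) < Kval O j) :
    ∃ l : Fin p, ∃ j' : Fin n, m < l ∧ j' ≠ j ∧
      O.symm (j, Oj O j m) < O.symm (j', Oj O j l) ∧
      O.symm (j', Oj O j l) < O.symm (j, Oj O j l) := by
  have h := Kval_not O hp j hm
  unfold NoInterruptF at h
  push_neg at h
  obtain ⟨lK, hlK, l, hl, j', hj', h1, h2⟩ := h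
  have hlKm : lK = m := Fin.ext hlK
  subst hlKm
  exact ⟨l, j', hl, hj', h1, h2⟩

noncomputable def IL (O : Csam n p) (hp : 0 < p) (j : Fin n) (m : Fin p) : Fin p × Fin n :=
  if hm : (m : ℕ) < Kval O j then
    ⟨(interrupt_exists O hp j m hm).choose,
     (interrupt_exists O hp j m hm).choose_spec.choose⟩
  else ⟨m, j⟩

lemma IL_spec (O : Csam n p) (hp : 0 < p) (j : Fin n) (m : Fin p)
    (hm : (m : ℕ) < Kval O j) :
    m < (IL O hp j m).1 ∧ (IL O hp j m).2 ≠ j ∧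
      O.symm (j, Oj O j m) < O.symm ((IL O hp j m).2, Oj O j (IL O hp j m).1) ∧
      O.symm ((IL O hp j m).2, Oj O j (IL O hp j m).1) < O.symm (j, Oj O j (IL O hp j m).1) := by
  have hspec := (interrupt_exists O hp j m hm).choose_spec.choose_spec
  simp only [IL, dif_pos hm]
  exact hspec

noncomputable def CB (O : Csam n p) (hp : 0 < p) (j : Fin n) (m : Fin p) : Bundle n p :=
  fun i => if i = Oj O j (IL O hp j m).1 then (IL O hp j m).2 else j

lemma CB_comp_ne (O : Csam n p) (hp : 0 < p) (j : Fin n) (m : Fin p) {l : Fin p}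
    (hl : l ≠ (IL O hp j m).1) : CB O hp j m (Oj O j l) = j := by
  have : Oj O j l ≠ Oj O j (IL O hp j m).1 := fun h => hl (Oj_inj O j h)
  simp [CB, this]

lemma CB_ach (O : Csam n p) (hp : 0 < p) (j : Fin n) (m : Fin p)
    (hm : (m : ℕ) < Kval O j) :
    achievable O (AA n p) j (O.symm (j, Oj O j m)) (CB O hp j m) := by
  obtain ⟨hlt, hne, h1, h2⟩ := IL_spec O hp j m hm
  constructor
  · intro c hc
    obtain ⟨l', rfl⟩ := Oj_surj O j c
    have hl' : l' < m := (tR_lt_tR O j).1 hc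
    have hl'ne : l' ≠ (IL O hp j m).1 := fun h => by
      rw [h] at hl'; exact absurd (lt_trans hlt hl') (lt_irrefl _)
    rw [CB_comp_ne O hp j m hl'ne]; rfl
  · intro c hc j'' hj'' heq
    by_cases hcl : c = Oj O j (IL O hp j m).1
    · subst hcl
      have hj''eq : j'' = (IL O hp j m).2 := by simpa [CB, AA] using heq
      subst hj''eq
      exact absurd hj'' (not_lt.2 (le_of_lt h1))
    · have hj''eq : j'' = j := by simpa [CB, AA, hcl] using heq
      subst hj''eq
      exact hc hj''

lemma CB_not_ach (O : Csam n p) (hp : 0 < p) (j : Fin n) (m : Fin p)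
    (hm : (m : ℕ) < Kval O j) :
    ¬ achievable O (AA n p) j (O.symm (j, Oj O j (IL O hp j m).1)) (CB O hp j m) := by
  obtain ⟨hlt, hne, h1, h2⟩ := IL_spec O hp j m hm
  intro hach
  have hc : ¬ O.symm (j, Oj O j (IL O hp j m).1) < O.symm (j, Oj O j (IL O hp j m).1) :=
    lt_irrefl _
  have h3 := hach.2 _ hc (IL O hp j m).2 h2
  apply h3
  simp [CB, AA]


noncomputable def dep (O : Csam n p) (j : Fin n) (x : Bundle n p) : ℕ :=
  (Finset.univ.filter fun l : Fin p =>
    achievable O (AA n p) j (O.symm (j, Oj O j l)) x).card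

lemma dep_iff (O : Csam n p) (j : Fin n) (x : Bundle n p) (l : Fin p) :
    achievable O (AA n p) j (O.symm (j, Oj O j l)) x ↔ (l : ℕ) < dep O j x := by
  have h := mem_iff_lt_card_of_dc
    (Finset.univ.filter fun l : Fin p =>
      achievable O (AA n p) j (O.symm (j, Oj O j l)) x)
    (by
      intro a b hab hb
      rw [Finset.mem_filter] at hb ⊢
      exact ⟨Finset.mem_univ _,
        achievable_anti O AA_valid ((tR_le_tR O j).2 hab) hb.2⟩) l
  simp only [dep]
  rw [← h, Finset.mem_filter]
  simp

noncomputable def MD (O : Csam n p) (hp : 0 < p) (j : Fin n) (x : Bundle n p) : ℕ :=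
  sInf {m : ℕ | ∃ mf : Fin p, (mf : ℕ) = m ∧ m < Kval O j ∧ CB O hp j mf = x}

lemma MD_spec (O : Csam n p) (hp : 0 < p) (j : Fin n) (x : Bundle n p)
    (hx : ∃ mf : Fin p, (mf : ℕ) < Kval O j ∧ CB O hp j mf = x) :
    ∃ mf : Fin p, (mf : ℕ) = MD O hp j x ∧ (mf : ℕ) < Kval O j ∧ CB O hp j mf = x := by
  obtain ⟨mf, h1, h2⟩ := hx
  have hne : {m : ℕ | ∃ mf : Fin p, (mf : ℕ) = m ∧ m < Kval O j ∧ CB O hp j mf = x}.Nonempty :=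
    ⟨(mf : ℕ), mf, rfl, h1, h2⟩
  obtain ⟨mf', hmf1, hmf2, hmf3⟩ := Nat.sInf_mem hne
  exact ⟨mf', hmf1, by rw [hmf1]; exact hmf2, hmf3⟩

lemma MD_le (O : Csam n p) (hp : 0 < p) (j : Fin n) (m : Fin p)
    (hm : (m : ℕ) < Kval O j) : MD O hp j (CB O hp j m) ≤ (m : ℕ) :=
  Nat.sInf_le ⟨m, rfl, hm, rfl⟩

noncomputable def cls (O : Csam n p) (hp : 0 < p) (j : Fin n) (x : Bundle n p) : ℕ :=
  if achievable O (AA n p) j (O.symm (j, Oj O j (⟨0, hp⟩ : Fin p))) x then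
    (if ∃ mf : Fin p, (mf : ℕ) < Kval O j ∧ CB O hp j mf = x then 2 * MD O hp j x + 1
     else if x = AA n p j then 2 * Kval O j + 1
     else 2 * min (dep O j x) (Kval O j + 1))
  else 0

lemma CB_ne_AA (O : Csam n p) (hp : 0 < p) (j : Fin n) (m : Fin p)
    (hm : (m : ℕ) < Kval O j) : CB O hp j m ≠ AA n p j := by
  intro h
  have h2 := congrFun h (Oj O j (IL O hp j m).1)
  simp [CB, AA] at h2
  exact (IL_spec O hp j m hm).2.1 h2

lemma cls_AA (O : Csam n p) (hp : 0 < p) (j : Fin n) :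
    cls O hp j (AA n p j) = 2 * Kval O j + 1 := by
  rw [cls, if_pos (achievable_self O AA_valid j _)]
  rw [if_neg, if_pos rfl]
  rintro ⟨mf, h1, h2⟩
  exact CB_ne_AA O hp j mf h1 h2

lemma cls_CB_le (O : Csam n p) (hp : 0 < p) (j : Fin n) (m : Fin p)
    (hm : (m : ℕ) < Kval O j) : cls O hp j (CB O hp j m) ≤ 2 * (m : ℕ) + 1 := by
  rw [cls, if_pos, if_pos ⟨m, hm, rfl⟩]
  · have := MD_le O hp j m hm; omega
  · refine achievable_anti O AA_valid ((tR_le_tR O j).2 ?_) (CB_ach O hp j m hm)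
    rw [Fin.le_def]; simp

noncomputable def keyf (O : Csam n p) (hp : 0 < p) (j : Fin n) (x : Bundle n p) : ℕ :=
  cls O hp j x * Fintype.card (Bundle n p) + ((Fintype.equivFin (Bundle n p)) x : ℕ)

lemma cls_le_of_keyf_le (O : Csam n p) (hp : 0 < p) (j : Fin n) {x y : Bundle n p}
    (h : keyf O hp j x ≤ keyf O hp j y) : cls O hp j x ≤ cls O hp j y := by
  by_contra hc
  push_neg at hc
  have hex : ((Fintype.equivFin (Bundle n p)) x : ℕ) < Fintype.card (Bundle n p) :=
    ((Fintype.equivFin (Bundle n p)) x).isLt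
  have hey : ((Fintype.equivFin (Bundle n p)) y : ℕ) < Fintype.card (Bundle n p) :=
    ((Fintype.equivFin (Bundle n p)) y).isLt
  unfold keyf at h
  have h2 : (cls O hp j y + 1) * Fintype.card (Bundle n p) ≤
      cls O hp j x * Fintype.card (Bundle n p) :=
    Nat.mul_le_mul_right _ hc
  rw [add_one_mul] at h2
  linarith

lemma keyf_inj (O : Csam n p) (hp : 0 < p) (j : Fin n) :
    Function.Injective (keyf O hp j) := by
  intro x y h
  have h1 := cls_le_of_keyf_le O hp j (le_of_eq h)
  have h2 := cls_le_of_keyf_le O hp j (le_of_eq h.symm)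
  have h3 : cls O hp j x = cls O hp j y := le_antisymm h1 h2
  unfold keyf at h
  rw [h3] at h
  have h4 : ((Fintype.equivFin (Bundle n p)) x : ℕ) =
      ((Fintype.equivFin (Bundle n p)) y : ℕ) := Nat.add_left_cancel h
  exact (Fintype.equivFin (Bundle n p)).injective (Fin.ext h4)

lemma top_comp (O : Csam n p) (hp : 0 < p) (j : Fin n) (l : Fin p) (b : Bundle n p)
    (hb : achievable O (AA n p) j (O.symm (j, Oj O j l)) b)
    (hmin : ∀ x, achievable O (AA n p) j (O.symm (j, Oj O j l)) x →
      keyf O hp j b ≤ keyf O hp j x) :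
    b (Oj O j l) = j := by
  have hb0 : achievable O (AA n p) j (O.symm (j, Oj O j (⟨0, hp⟩ : Fin p))) b := by
    refine achievable_anti O AA_valid ((tR_le_tR O j).2 ?_) hb
    rw [Fin.le_def]; simp
  have hclsb : cls O hp j b ≤ 2 * min (l : ℕ) (Kval O j) + 1 := by
    rcases lt_or_ge (l : ℕ) (Kval O j) with hl | hl
    · have h1 := cls_le_of_keyf_le O hp j (hmin (CB O hp j l) (CB_ach O hp j l hl))
      have h2 := cls_CB_le O hp j l hl
      have h3 : min (l : ℕ) (Kval O j) = (l : ℕ) := min_eq_left (le_of_lt hl)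
      omega
    · have h1 := cls_le_of_keyf_le O hp j (hmin (AA n p j) (achievable_self O AA_valid j _))
      rw [cls_AA] at h1
      have h3 : min (l : ℕ) (Kval O j) = Kval O j := min_eq_right hl
      omega
  by_cases hbC : ∃ mf : Fin p, (mf : ℕ) < Kval O j ∧ CB O hp j mf = b
  · obtain ⟨m0, hm0MD, hm0K, hm0CB⟩ := MD_spec O hp j b hbC
    have hlne : l ≠ (IL O hp j m0).1 := by
      intro h
      rw [h] at hb
      rw [← hm0CB] at hb
      exact CB_not_ach O hp j m0 hm0K hb
    rw [← hm0CB]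
    exact CB_comp_ne O hp j m0 hlne
  by_cases hbA : b = AA n p j
  · rw [hbA]; rfl
  · exfalso
    have hcls : cls O hp j b = 2 * min (dep O j b) (Kval O j + 1) := by
      rw [cls, if_pos hb0, if_neg hbC, if_neg hbA]
    have hdep : (l : ℕ) < dep O j b := (dep_iff O j b l).1 hb
    rw [hcls] at hclsb
    rcases le_or_gt ((l : ℕ)) (Kval O j) with h | h
    · rw [min_eq_left h] at hclsb
      have h5 : (l : ℕ) + 1 ≤ min (dep O j b) (Kval O j + 1) := le_min (by omega) (by omega)
      linarith
    · rw [min_eq_right (by omega : Kval O j ≤ (l : ℕ))] at hclsb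
      have h5 : Kval O j + 1 ≤ min (dep O j b) (Kval O j + 1) := le_min (by omega) (le_refl _)
      linarith


lemma interrupt_T (O : Csam n p) (hp : 0 < p) (j d : Fin n) (hdj : d ≠ j) (l : Fin p)
    (hKl : Kval O j ≤ (l : ℕ)) (hTle : TT O hp j ≤ O.symm (d, Oj O j l)) :
    TT O hp j < TT O hp d := by
  have hsne : O.symm (d, Oj O j l) ≠ TT O hp j := by
    intro h
    have h2 := O.symm.injective (h.trans rfl)
    exact hdj (congrArg Prod.fst h2)
  have hs_gt : TT O hp j < O.symm (d, Oj O j l) := lt_of_le_of_ne hTle (Ne.symm hsne)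
  obtain ⟨ld, hld⟩ := Oj_surj O d (Oj O j l)
  by_contra hTd
  have hTdne : TT O hp d ≠ TT O hp j := by
    intro h
    have h2 := O.symm.injective (h : O.symm _ = O.symm _)
    exact hdj (congrArg Prod.fst h2)
  have hTd' : TT O hp d < TT O hp j := lt_of_le_of_ne (le_of_not_gt hTd) hTdne
  have hjd_ne : O.symm (j, Oj O j l) ≠ O.symm (d, Oj O j l) := by
    intro h
    exact hdj (congrArg Prod.fst (O.symm.injective h)).symm
  have hTjle : TT O hp j ≤ O.symm (j, Oj O j l) := by
    refine (tR_le_tR O j).2 ?_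
    rw [Fin.le_def]
    exact hKl
  rcases lt_or_gt_of_ne hjd_ne with hcase | hcase
  · have hldgt : KF O hp d < ld := by
      apply (tR_lt_tR O d).1
      rw [hld]
      exact lt_trans hTd' hs_gt
    refine (Kval_mem O hp d).2 (KF O hp d) rfl ld hldgt j (Ne.symm hdj) ⟨?_, ?_⟩
    · rw [hld]
      exact lt_of_lt_of_le hTd' hTjle
    · rw [hld]
      exact hcase
  · have hlgt : KF O hp j < l := by
      apply (tR_lt_tR O j).1
      exact lt_trans hs_gt hcase
    exact (Kval_mem O hp j).2 (KF O hp j) rfl l hlgt d hdj ⟨hs_gt, hcase⟩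


noncomputable def gfun (O : Csam n p) (hp : 0 < p) (j : Fin n) : ℕ :=
  (Finset.univ.filter fun d => TT O hp j < TT O hp d).card

lemma part2 (hn : 0 < n) (hp : 0 < p) (O : Csam n p) :
    ∃ P : Profile n p, ValidProfile P ∧
      ∃ A : Fin n → Bundle n p, ValidAlloc A ∧ (∀ j, OptPlays O P A j) ∧
        n * (n ^ p + 1) - ∑ j ∈ Finset.range n, (j + 1) ^ p ≤
          ∑ j : Fin n, rank (P j) (A j) := by
  have hcard_univ : (Finset.univ : Finset (Bundle n p)).card = n ^ p := by
    rw [Finset.card_univ]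
    simp [Fintype.card_fun]
  refine ⟨fun j b b' => keyf O hp j b < keyf O hp j b', ?_, AA n p, AA_valid, ?_, ?_⟩
  · intro j
    refine { trichotomous := ?_, irrefl := ?_, trans := ?_ }
    · intro a b h1 h2
      exact keyf_inj O hp j (le_antisymm (not_lt.1 h2) (not_lt.1 h1))
    · intro a; exact lt_irrefl _
    · intro a b c; exact lt_trans
  · intro j i
    obtain ⟨l, rfl⟩ := Oj_surj O j i
    have hmem : AA n p j ∈ Finset.univ.filter
        (fun x => achievable O (AA n p) j (O.symm (j, Oj O j l)) x) :=
      Finset.mem_filter.2 ⟨Finset.mem_univ _, achievable_self O AA_valid j _⟩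
    obtain ⟨b, hbF, hbmin⟩ := Finset.exists_min_image _ (keyf O hp j) ⟨_, hmem⟩
    refine ⟨b, (Finset.mem_filter.1 hbF).2, ?_, ?_⟩
    · intro b' hb' hne
      refine lt_of_le_of_ne (hbmin b' (Finset.mem_filter.2 ⟨Finset.mem_univ _, hb'⟩)) ?_
      intro h
      exact hne (keyf_inj O hp j h.symm)
    · exact (top_comp O hp j l b (Finset.mem_filter.1 hbF).2
        (fun x hx => hbmin x (Finset.mem_filter.2 ⟨Finset.mem_univ _, hx⟩))).symm
  · show n * (n ^ p + 1) - ∑ j ∈ Finset.range n, (j + 1) ^ p ≤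
      ∑ j : Fin n, rank (fun b b' => keyf O hp j b < keyf O hp j b') (AA n p j)
    have hTinj : Function.Injective (TT O hp) := by
      intro a b h
      have h2 := O.symm.injective (h : O.symm _ = O.symm _)
      exact congrArg Prod.fst h2
    have key : ∀ j : Fin n, n ^ p + 1 ≤
        rank (fun b b' => keyf O hp j b < keyf O hp j b') (AA n p j) +
          (gfun O hp j + 1) ^ p := by
      intro j
      have hsub : (Finset.univ.filter fun x : Bundle n p =>
          ¬ keyf O hp j x < keyf O hp j (AA n p j)) ⊆
          Finset.univ.filter (fun x => achievable O (AA n p) j (TT O hp j) x) := by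
        intro x hx
        rw [Finset.mem_filter] at hx
        have hle : keyf O hp j (AA n p j) ≤ keyf O hp j x := le_of_not_gt hx.2
        have hcls := cls_le_of_keyf_le O hp j hle
        rw [cls_AA] at hcls
        refine Finset.mem_filter.2 ⟨Finset.mem_univ _, ?_⟩
        by_cases h0 : achievable O (AA n p) j (O.symm (j, Oj O j (⟨0, hp⟩ : Fin p))) x
        · by_cases hC : ∃ mf : Fin p, (mf : ℕ) < Kval O j ∧ CB O hp j mf = x
          · obtain ⟨mf, h1, h2, h3⟩ := MD_spec O hp j x hC
            rw [cls, if_pos h0, if_pos hC] at hcls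
            omega
          · by_cases hA2 : x = AA n p j
            · rw [hA2]; exact achievable_self O AA_valid j _
            · rw [cls, if_pos h0, if_neg hC, if_neg hA2] at hcls
              have h5 := min_le_left (dep O j x) (Kval O j + 1)
              have hdep : Kval O j < dep O j x := by linarith
              exact (dep_iff O j x (KF O hp j)).2 hdep
        · rw [cls, if_neg h0] at hcls; omega
      have hcard1 : (Finset.univ.filter fun x : Bundle n p =>
          ¬ keyf O hp j x < keyf O hp j (AA n p j)).card ≤ (gfun O hp j + 1) ^ p := by
        refine le_trans (Finset.card_le_card hsub) ?_
        have hSKsub : (Finset.univ.filter (fun x : Bundle n p =>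
            achievable O (AA n p) j (TT O hp j) x)) ⊆ Fintype.piFinset (fun c =>
            if O.symm (j, c) < TT O hp j then ({j} : Finset (Fin n))
            else Finset.univ.filter (fun d => availAt O (AA n p) (TT O hp j) c d)) := by
          intro x hx
          rw [Fintype.mem_piFinset]
          intro c
          have hach := (Finset.mem_filter.1 hx).2
          by_cases hc : O.symm (j, c) < TT O hp j
          · simp only [if_pos hc]
            rw [Finset.mem_singleton]
            exact hach.1 c hc
          · simp only [if_neg hc]
            exact Finset.mem_filter.2 ⟨Finset.mem_univ _, hach.2 c hc⟩
        refine le_trans (Finset.card_le_card hSKsub) ?_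
        rw [Fintype.card_piFinset]
        have hfac : ∀ c : Fin p, (if O.symm (j, c) < TT O hp j then ({j} : Finset (Fin n))
            else Finset.univ.filter (fun d => availAt O (AA n p) (TT O hp j) c d)).card ≤
            gfun O hp j + 1 := by
          intro c
          by_cases hc : O.symm (j, c) < TT O hp j
          · simp only [if_pos hc]
            rw [Finset.card_singleton]
            omega
          · simp only [if_neg hc]
            have hins : (Finset.univ.filter fun d =>
                availAt O (AA n p) (TT O hp j) c d) ⊆
                insert j (Finset.univ.filter fun d => TT O hp j < TT O hp d) := by
              intro d hd
              rw [Finset.mem_filter] at hd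
              rcases eq_or_ne d j with rfl | hne
              · exact Finset.mem_insert_self _ _
              · refine Finset.mem_insert_of_mem (Finset.mem_filter.2 ⟨Finset.mem_univ _, ?_⟩)
                have h1 : ¬ O.symm (d, c) < TT O hp j := fun h => hd.2 d h rfl
                obtain ⟨l, rfl⟩ := Oj_surj O j c
                have hKl : Kval O j ≤ (l : ℕ) := by
                  by_contra h
                  apply hc
                  refine (tR_lt_tR O j).2 ?_
                  rw [Fin.lt_def]
                  simp only [KF]
                  omega
                exact interrupt_T O hp j d hne l hKl (le_of_not_gt h1)
            refine le_trans (Finset.card_le_card hins) ?_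
            refine le_trans (Finset.card_insert_le _ _) ?_
            exact le_refl _
        calc ∏ c : Fin p, (if O.symm (j, c) < TT O hp j then ({j} : Finset (Fin n))
              else Finset.univ.filter (fun d => availAt O (AA n p) (TT O hp j) c d)).card
            ≤ ∏ _c : Fin p, (gfun O hp j + 1) := Finset.prod_le_prod' (fun c _ => hfac c)
          _ = (gfun O hp j + 1) ^ p := by
              rw [Finset.prod_const, Finset.card_univ, Fintype.card_fin]
      have hsplit := Finset.card_filter_add_card_filter_not
        (s := (Finset.univ : Finset (Bundle n p)))
        (p := fun x : Bundle n p => keyf O hp j x < keyf O hp j (AA n p j))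
      have hrank : rank (fun b b' => keyf O hp j b < keyf O hp j b') (AA n p j) =
          1 + (Finset.univ.filter fun c : Bundle n p =>
            keyf O hp j c < keyf O hp j (AA n p j)).card := by
        simp only [rank]
      omega
    have hgmono : ∀ a b : Fin n, TT O hp a < TT O hp b → gfun O hp b < gfun O hp a := by
      intro a b h
      apply Finset.card_lt_card
      rw [Finset.ssubset_def]
      constructor
      · intro d hd
        rw [Finset.mem_filter] at hd ⊢
        exact ⟨hd.1, lt_trans h hd.2⟩
      · intro hsup
        have h2 : b ∈ Finset.univ.filter fun d => TT O hp b < TT O hp d :=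
          hsup (Finset.mem_filter.2 ⟨Finset.mem_univ _, h⟩)
        exact lt_irrefl _ (Finset.mem_filter.1 h2).2
    have hginj : Function.Injective (gfun O hp) := by
      intro a b h
      by_contra hne
      have hTne : TT O hp a ≠ TT O hp b := fun h2 => hne (hTinj h2)
      rcases lt_or_gt_of_ne hTne with h2 | h2
      · have := hgmono a b h2; omega
      · have := hgmono b a h2; omega
    have hglt : ∀ j, gfun O hp j < n := by
      intro j
      have hsub2 : (Finset.univ.filter fun d => TT O hp j < TT O hp d) ⊆
          Finset.univ.erase j := by
        intro d hd
        rw [Finset.mem_filter] at hd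
        refine Finset.mem_erase.2 ⟨?_, Finset.mem_univ _⟩
        intro h
        rw [h] at hd
        exact lt_irrefl _ hd.2
      have h3 := Finset.card_le_card hsub2
      rw [Finset.card_erase_of_mem (Finset.mem_univ _), Finset.card_univ,
        Fintype.card_fin] at h3
      unfold gfun
      omega
    have himg : Finset.univ.image (gfun O hp) = Finset.range n := by
      apply Finset.eq_of_subset_of_card_le
      · intro m hm
        obtain ⟨j, _, rfl⟩ := Finset.mem_image.1 hm
        exact Finset.mem_range.2 (hglt j)
      · rw [Finset.card_range, Finset.card_image_of_injective _ hginj, Finset.card_univ,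
          Fintype.card_fin]
    have hsumg : ∑ j : Fin n, (gfun O hp j + 1) ^ p = ∑ m ∈ Finset.range n, (m + 1) ^ p := by
      rw [← himg, Finset.sum_image (fun a _ b _ h => hginj h)]
    have hsum1 : n * (n ^ p + 1) ≤
        ∑ j : Fin n, rank (fun b b' => keyf O hp j b < keyf O hp j b') (AA n p j) +
          ∑ j : Fin n, (gfun O hp j + 1) ^ p := by
      rw [← Finset.sum_add_distrib]
      calc n * (n ^ p + 1) = ∑ _j : Fin n, (n ^ p + 1) := by
            rw [Finset.sum_const, Finset.card_univ, Fintype.card_fin, smul_eq_mul]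
        _ ≤ _ := Finset.sum_le_sum (fun j _ => key j)
    omega

end Help
theorem statement10 (n p : ℕ) (hn : 0 < n) (hp : 0 < p) :
    (∀ O : Csam n p, IsSerialDict O →
      ∀ P : Profile n p, ValidProfile P →
        ∀ A : Fin n → Bundle n p, ValidAlloc A → (∀ j, OptPlays O P A j) →
          ∑ j : Fin n, rank (P j) (A j) ≤
            n * (n ^ p + 1) - ∑ j ∈ Finset.range n, (j + 1) ^ p) ∧
    (∀ O : Csam n p, ∃ P : Profile n p, ValidProfile P ∧
      ∃ A : Fin n → Bundle n p, ValidAlloc A ∧ (∀ j, OptPlays O P A j) ∧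
        n * (n ^ p + 1) - ∑ j ∈ Finset.range n, (j + 1) ^ p ≤
          ∑ j : Fin n, rank (P j) (A j)) := by
  exact ⟨fun O hSD P hP A hA hOpt => part1 hn hp O hSD P hP A hA hOpt,
         fun O => part2 hn hp O⟩
end

section
/- The worst-case egalitarian rank of any serial dictatorship CSAM with all-optimistic agents equals n^p: there exists a profile (e.g., all agents having identical preferences) in which some agent receives her bottom-ranked bundle. -/
open scoped Classical

/-- Positional encoding of a bundle. -/
noncomputable def enc {n p : ℕ} (b : Bundle n p) : ℕ := (finFunctionFinEquiv b : ℕ)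

lemma enc_inj {n p : ℕ} : Function.Injective (enc (n := n) (p := p)) :=
  fun a b h => finFunctionFinEquiv.injective (Fin.val_injective h)

lemma enc_mono {n p : ℕ} {b c : Bundle n p} (h : ∀ i, b i ≤ c i) : enc b ≤ enc c := by
  simp only [enc, finFunctionFinEquiv_apply]
  exact Finset.sum_le_sum fun i _ => Nat.mul_le_mul_right _ (h i)

lemma bundle_card (n p : ℕ) : Fintype.card (Bundle n p) = n ^ p := by
  simp [Bundle]

theorem statement11 (n p : ℕ) (hn : 0 < n) (hp : 0 < p)
    (O : Csam n p) (hO : IsSerialDict O) :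
    (∀ P : Profile n p, ValidProfile P →
      ∀ A : Fin n → Bundle n p, ValidAlloc A → (∀ j, OptPlays O P A j) →
        ∀ j : Fin n, rank (P j) (A j) ≤ n ^ p) ∧
    (∃ P : Profile n p, ValidProfile P ∧
      ∃ A : Fin n → Bundle n p, ValidAlloc A ∧ (∀ j, OptPlays O P A j) ∧
        ∃ j : Fin n, rank (P j) (A j) = n ^ p) := by
  obtain ⟨σ, hσ⟩ := hO
  have hnp1 : 1 ≤ n ^ p := Nat.one_le_pow _ _ hn
  constructor
  · intro P hP A _ _ j
    have hsub : (Finset.univ.filter fun c => P j c (A j)) ⊆ Finset.univ.erase (A j) := by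
      intro c hc
      simp only [Finset.mem_filter] at hc
      refine Finset.mem_erase.2 ⟨?_, Finset.mem_univ _⟩
      rintro rfl
      exact (hP j).irrefl _ hc.2
    have hcard := Finset.card_le_card hsub
    rw [Finset.card_erase_of_mem (Finset.mem_univ _), Finset.card_univ, bundle_card] at hcard
    unfold rank
    omega
  · -- common preference: smaller encoding is better
    refine ⟨fun _ b c => enc b < enc c, ?_, fun j _ => σ j, ?_, ?_, ?_⟩
    · intro j
      refine { trichotomous := ?_, irrefl := ?_, trans := ?_ }
      · intro b c
        rcases lt_trichotomy (enc b) (enc c) with h | h | h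
        · exact fun h1 _ => absurd h h1
        · exact fun _ _ => enc_inj h
        · exact fun _ h2 => absurd h h2
      · exact fun b => lt_irrefl _
      · exact fun a b c => lt_trans
    · intro i a b h
      exact σ.injective h
    · -- OptPlays
      intro j i
      set t := O.symm (j, i) with ht
      -- every available item at any of j's rounds is ≥ σ j
      have havail : ∀ (c : Fin p) (d : Fin n),
          availAt O (fun j' _ => σ j') t c d → σ j ≤ d := by
        intro c d hd
        by_contra hlt
        push_neg at hlt
        set j'' := σ.symm d with hj''
        have hσj'' : σ j'' = d := σ.apply_symm_apply d
        have hne : j'' ≠ j := by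
          intro h; rw [h] at hσj''; exact absurd hσj'' (ne_of_gt hlt)
        have : O.symm (j'', c) < t := (hσ j'' j c i hne).2 (hσj'' ▸ hlt)
        exact hd j'' this hσj''
      refine ⟨fun _ : Fin p => σ j, ⟨?_, ?_⟩, ?_, rfl⟩
      · intro c _; rfl
      · intro c hc j' hj' hAj'
        rcases eq_or_ne j' j with rfl | hne
        · exact hc hj'
        · exact ne_of_lt ((hσ j' j c i hne).1 hj') hAj'
      · intro b' hb' hne
        have hle : ∀ c, σ j ≤ b' c := by
          intro c
          by_cases h : O.symm (j, c) < t
          · rw [hb'.1 c h]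
          · exact havail c (b' c) (hb'.2 c h)
        have h1 : enc (fun _ : Fin p => σ j) ≤ enc b' := enc_mono hle
        exact lt_of_le_of_ne h1 fun h => hne (enc_inj h.symm)
    · -- last agent gets worst bundle
      set d : Fin n := ⟨n - 1, by omega⟩ with hd
      refine ⟨σ.symm d, ?_⟩
      set j := σ.symm d with hj
      have hσj : σ j = d := σ.apply_symm_apply d
      have htop : ∀ c : Bundle n p, enc c ≤ enc (fun _ : Fin p => σ j) := by
        intro c
        refine enc_mono fun i => ?_
        rw [hσj]
        exact Fin.le_def.2 (by have := (c i).isLt; simp [hd]; omega)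
      have hfeq : (Finset.univ.filter fun c : Bundle n p => enc c < enc (fun _ : Fin p => σ j))
          = Finset.univ.erase (fun _ : Fin p => σ j) := by
        ext c
        simp only [Finset.mem_filter, Finset.mem_erase, Finset.mem_univ, true_and, and_true]
        constructor
        · intro h heq; rw [heq] at h; exact lt_irrefl _ h
        · intro h; exact lt_of_le_of_ne (htop c) fun he => h (enc_inj he)
      have key : 1 + (Finset.univ.filter fun c : Bundle n p =>
          enc c < enc (fun _ : Fin p => σ j)).card = n ^ p := by
        rw [hfeq, Finset.card_erase_of_mem (Finset.mem_univ _), Finset.card_univ, bundle_card]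
        omega
      unfold rank
      convert key using 4
end
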